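/- arXiv:2203.03687 — 7 statements merged into one kernel-verified Lean document; each statement's English description precedes it below -/
import Mathlib

section
/- Let 𝔖 be a set association scheme on a finite set Ω. If α is a cell of 𝔖, then the set of complements α^c = {Ω \ a : a ∈ α} is also a cell of 𝔖. -/
namespace Paper


def IsTriangle {Ω : Type*} (a b c : Set Ω) : Prop :=
  a ⊆ b ∪ c ∧ b ⊆ a ∪ c ∧ c ⊆ a ∪ b

noncomputable def tripleType {Ω : Type*} (a b c : Set Ω) : ℕ × ℕ × ℕ × ℕ × ℕ × ℕ × ℕ :=
  (a.ncard, b.ncard, c.ncard, (a ∩ b).ncard, (a ∩ c).ncard, (b ∩ c).ncard, (a ∩ b ∩ c).ncard)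

noncomputable def typeCount {Ω : Type*} (β γ : Set (Set Ω)) (a : Set Ω) (τ : ℕ × ℕ × ℕ × ℕ × ℕ × ℕ × ℕ) : ℕ :=
  {p : Set Ω × Set Ω | p.1 ∈ β ∧ p.2 ∈ γ ∧ tripleType a p.1 p.2 = τ}.ncard

def IsSAS {Ω : Type*} (S : Set (Set (Set Ω))) : Prop :=
  Setoid.IsPartition S ∧
  (∀ α ∈ S, ∀ a ∈ α, ∀ a' ∈ α, Set.ncard a = Set.ncard a') ∧
  (∀ α ∈ S, ∀ β ∈ S, ∀ γ ∈ S, ∀ a ∈ α, ∀ a' ∈ α,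
    ∀ t₁ t₂ t₃ : Set Ω, IsTriangle t₁ t₂ t₃ →
      typeCount β γ a (tripleType t₁ t₂ t₃) = typeCount β γ a' (tripleType t₁ t₂ t₃))

def SetHomog {Ω : Type*} (S : Set (Set (Set Ω))) : Prop :=
  {a : Set Ω | ∃ v : Ω, a = {v}} ∈ S

lemma triple_eq_aux {Ω : Type*} [Finite Ω] (a b c a₀ : Set Ω) (hk : a.ncard = a₀.ncard)
    (h : tripleType a b c = tripleType a₀ a₀ᶜ Set.univ) : b = aᶜ ∧ c = Set.univ := by
  simp only [tripleType, Prod.mk.injEq] at h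
  obtain ⟨h1, h2, h3, h4, h5, h6, h7⟩ := h
  have hc : c = Set.univ :=
    Set.eq_of_subset_of_ncard_le (Set.subset_univ c) (le_of_eq h3.symm) (Set.toFinite _)
  have hab : a ∩ b = ∅ := by
    rw [Set.inter_compl_self, Set.ncard_empty] at h4
    exact (Set.ncard_eq_zero (Set.toFinite _)).mp h4
  have hbsub : b ⊆ aᶜ :=
    Set.subset_compl_iff_disjoint_left.mpr (Set.disjoint_iff_inter_eq_empty.mpr hab)
  have hcompl : aᶜ.ncard = a₀ᶜ.ncard := by
    have e1 := Set.ncard_add_ncard_compl a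
    have e2 := Set.ncard_add_ncard_compl a₀
    omega
  have hb : b = aᶜ :=
    Set.eq_of_subset_of_ncard_le hbsub (by rw [hcompl, ← h2]) (Set.toFinite _)
  exact ⟨hb, hc⟩

lemma compl_mem_key {Ω : Type*} [Finite Ω] (S : Set (Set (Set Ω))) (hS : IsSAS S)
    (α β : Set (Set Ω)) (hα : α ∈ S) (hβ : β ∈ S)
    (a₀ : Set Ω) (ha₀ : a₀ ∈ α) (ha₀c : a₀ᶜ ∈ β)
    (a : Set Ω) (ha : a ∈ α) : aᶜ ∈ β := by
  obtain ⟨γ, ⟨hγ, huγ⟩, -⟩ := hS.1.2 (Set.univ : Set Ω)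
  have hk : a.ncard = a₀.ncard := hS.2.1 α hα a ha a₀ ha₀
  have tri : IsTriangle a₀ a₀ᶜ (Set.univ : Set Ω) := by
    refine ⟨?_, ?_, ?_⟩ <;> simp
  have hcount := hS.2.2 α hα β hβ γ hγ a₀ ha₀ a ha a₀ a₀ᶜ Set.univ tri
  have h1 : typeCount β γ a₀ (tripleType a₀ a₀ᶜ Set.univ) = 1 := by
    have hset : {p : Set Ω × Set Ω | p.1 ∈ β ∧ p.2 ∈ γ ∧
        tripleType a₀ p.1 p.2 = tripleType a₀ a₀ᶜ Set.univ} = {(a₀ᶜ, Set.univ)} := by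
      ext ⟨b, c⟩
      constructor
      · rintro ⟨hb, hc, htype⟩
        obtain ⟨hb', hc'⟩ := triple_eq_aux a₀ b c a₀ rfl htype
        simp [hb', hc']
      · rintro hp
        simp only [Set.mem_singleton_iff, Prod.mk.injEq] at hp
        obtain ⟨rfl, rfl⟩ := hp
        exact ⟨ha₀c, huγ, rfl⟩
    rw [typeCount, hset, Set.ncard_singleton]
  rw [h1] at hcount
  have hne : ({p : Set Ω × Set Ω | p.1 ∈ β ∧ p.2 ∈ γ ∧
      tripleType a p.1 p.2 = tripleType a₀ a₀ᶜ Set.univ}).Nonempty := by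
    apply Set.nonempty_of_ncard_ne_zero
    rw [show ({p : Set Ω × Set Ω | p.1 ∈ β ∧ p.2 ∈ γ ∧
      tripleType a p.1 p.2 = tripleType a₀ a₀ᶜ Set.univ}).ncard
        = typeCount β γ a (tripleType a₀ a₀ᶜ Set.univ) from rfl, ← hcount]
    exact one_ne_zero
  obtain ⟨⟨b, c⟩, hb, hc, htype⟩ := hne
  obtain ⟨hb', -⟩ := triple_eq_aux a b c a₀ hk htype
  rwa [hb'] at hb

theorem stmt2 {Ω : Type*} [Finite Ω] (S : Set (Set (Set Ω))) (hS : IsSAS S)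
    (α : Set (Set Ω)) (hα : α ∈ S) :
    (fun a : Set Ω => aᶜ) '' α ∈ S := by
  obtain ⟨a₀, ha₀⟩ : α.Nonempty :=
    Set.nonempty_iff_ne_empty.mpr (fun h => hS.1.1 (h ▸ hα))
  obtain ⟨β, ⟨hβ, hc⟩, -⟩ := hS.1.2 (a₀ᶜ)
  have h1 : ∀ a ∈ α, aᶜ ∈ β := compl_mem_key S hS α β hα hβ a₀ ha₀ hc
  have h2 : ∀ b ∈ β, bᶜ ∈ α :=
    compl_mem_key S hS β α hβ hα a₀ᶜ hc (by simpa using ha₀)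
  have himg : (fun a : Set Ω => aᶜ) '' α = β := by
    ext b
    constructor
    · rintro ⟨a, ha, rfl⟩
      exact h1 a ha
    · intro hb
      exact ⟨bᶜ, h2 b hb, compl_compl b⟩
  rw [himg]
  exact hβ

end Paper
end

section
/- Let 𝔖 be a set association scheme on a finite set Ω and let α, β be cells of 𝔖. Then the bipartite containment graph {(a, b) ∈ α × β : a ⊆ b} is biregular: the number of b ∈ β with a ⊆ b is the same for every a ∈ α, and the number of a ∈ α with a ⊆ b is the same for every b ∈ β. -/
namespace Paper


lemma subset_of_ncard_inter {Ω : Type*} [Finite Ω] {s t : Set Ω}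
    (h : (s ∩ t).ncard = s.ncard) : s ⊆ t := by
  have := Set.eq_of_subset_of_ncard_le (Set.inter_subset_left (s := s) (t := t)) h.ge
    (Set.toFinite s)
  rw [← this]
  exact Set.inter_subset_right

lemma key1 {Ω : Type*} [Finite Ω] (β : Set (Set Ω)) (a a₀ b₀ : Set Ω)
    (hcard : ∀ b ∈ β, b.ncard = b₀.ncard) (ha : a.ncard = a₀.ncard)
    (hab : a₀ ⊆ b₀) :
    typeCount β β a (tripleType a₀ b₀ b₀) = {b : Set Ω | b ∈ β ∧ a ⊆ b}.ncard := by
  have hset : {p : Set Ω × Set Ω | p.1 ∈ β ∧ p.2 ∈ β ∧ tripleType a p.1 p.2 = tripleType a₀ b₀ b₀}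
      = (fun b => (b, b)) '' {b : Set Ω | b ∈ β ∧ a ⊆ b} := by
    ext ⟨p1, p2⟩
    simp only [Set.mem_setOf_eq, Set.mem_image, Prod.mk.injEq, tripleType,
      Set.inter_eq_left.mpr hab, Set.inter_self, Set.inter_eq_left.mpr (Set.inter_subset_left.trans hab)]
    constructor
    · rintro ⟨h1, h2, e1, e2, e3, e4, e5, e6, e7⟩
      have hp1 : a ⊆ p1 := subset_of_ncard_inter (by rw [e4, ha])
      have hp12 : p1 ⊆ p2 := subset_of_ncard_inter (by rw [e6, e2])
      have hp21 : p2 ⊆ p1 := by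
        rw [Set.inter_comm] at e6
        exact subset_of_ncard_inter (by rw [e6, e3])
      exact ⟨p1, ⟨h1, hp1⟩, rfl, hp12.antisymm hp21⟩
    · rintro ⟨b, ⟨hb, habs⟩, rfl, rfl⟩
      have h1 : (a ∩ b) = a := Set.inter_eq_left.mpr habs
      refine ⟨hb, hb, ?_, ?_, ?_, ?_, ?_, ?_, ?_⟩ <;>
        simp [Set.inter_assoc, Set.inter_self, h1, ha, hcard b hb]
  rw [typeCount, hset, Set.ncard_image_of_injective _ (fun x y h => (Prod.mk.injEq ..).mp h |>.1)]

lemma key2 {Ω : Type*} [Finite Ω] (α β : Set (Set Ω)) (b a₀ b₀ : Set Ω)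
    (hcardα : ∀ a ∈ α, a.ncard = a₀.ncard) (hcardβ : ∀ c ∈ β, c.ncard = b₀.ncard)
    (hb : b ∈ β) (hab : a₀ ⊆ b₀) :
    typeCount α β b (tripleType b₀ a₀ b₀) = {a : Set Ω | a ∈ α ∧ a ⊆ b}.ncard := by
  have hbcard : b.ncard = b₀.ncard := hcardβ b hb
  have hset : {p : Set Ω × Set Ω | p.1 ∈ α ∧ p.2 ∈ β ∧ tripleType b p.1 p.2 = tripleType b₀ a₀ b₀}
      = (fun a => (a, b)) '' {a : Set Ω | a ∈ α ∧ a ⊆ b} := by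
    ext ⟨p1, p2⟩
    have h1 : b₀ ∩ a₀ = a₀ := Set.inter_eq_right.mpr hab
    have h2 : a₀ ∩ b₀ = a₀ := Set.inter_eq_left.mpr hab
    simp only [Set.mem_setOf_eq, Set.mem_image, Prod.mk.injEq, tripleType, h1,
      Set.inter_self, Set.inter_assoc, h2, h1]
    constructor
    · rintro ⟨hp1, hp2, e1, e2, e3, e4, e5, e6, e7⟩
      have hbp2 : b ⊆ p2 := subset_of_ncard_inter (by rw [e5, hbcard])
      have hp2b : p2 ⊆ b := by
        rw [Set.inter_comm] at e5
        exact subset_of_ncard_inter (by rw [e5, e3])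
      have hp1b : p1 ⊆ b := by
        rw [Set.inter_comm] at e4
        exact subset_of_ncard_inter (by rw [e4, e2])
      exact ⟨p1, ⟨hp1, hp1b⟩, rfl, (hp2b.antisymm hbp2).symm ▸ rfl⟩
    · rintro ⟨a, ⟨haα, hasub⟩, rfl, rfl⟩
      have hba : b ∩ a = a := Set.inter_eq_right.mpr hasub
      have hab' : a ∩ b = a := Set.inter_eq_left.mpr hasub
      refine ⟨haα, hb, ?_, ?_, ?_, ?_, ?_, ?_, ?_⟩ <;>
        simp [Set.inter_assoc, Set.inter_self, hba, hab', hbcard, hcardα a haα]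
  rw [typeCount, hset, Set.ncard_image_of_injective _ (fun x y h => (Prod.mk.injEq ..).mp h |>.1)]

theorem stmt3 {Ω : Type*} [Finite Ω] (S : Set (Set (Set Ω))) (hS : IsSAS S)
    (α β : Set (Set Ω)) (hα : α ∈ S) (hβ : β ∈ S) :
    (∀ a ∈ α, ∀ a' ∈ α,
      {b : Set Ω | b ∈ β ∧ a ⊆ b}.ncard = {b : Set Ω | b ∈ β ∧ a' ⊆ b}.ncard) ∧
    (∀ b ∈ β, ∀ b' ∈ β,
      {a : Set Ω | a ∈ α ∧ a ⊆ b}.ncard = {a : Set Ω | a ∈ α ∧ a ⊆ b'}.ncard) := by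
  obtain ⟨-, hcards, hreg⟩ := hS
  constructor
  · -- first statement
    have main : ∀ a ∈ α, ∀ a' ∈ α, ∀ b₀ ∈ β, a' ⊆ b₀ →
        {b : Set Ω | b ∈ β ∧ a ⊆ b}.ncard = {b : Set Ω | b ∈ β ∧ a' ⊆ b}.ncard := by
      intro a ha a' ha' b₀ hb₀ hab
      have htri : IsTriangle a' b₀ b₀ :=
        ⟨hab.trans Set.subset_union_left, Set.subset_union_right, Set.subset_union_right⟩
      have hc := hreg α hα β hβ β hβ a ha a' ha' a' b₀ b₀ htri
      rwa [key1 β a a' b₀ (fun b hb => hcards β hβ b hb b₀ hb₀) (hcards α hα a ha a' ha') hab,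
        key1 β a' a' b₀ (fun b hb => hcards β hβ b hb b₀ hb₀) rfl hab] at hc
    intro a ha a' ha'
    rcases Set.eq_empty_or_nonempty {b : Set Ω | b ∈ β ∧ a' ⊆ b} with h | ⟨b₀, hb₀, hab⟩
    · rcases Set.eq_empty_or_nonempty {b : Set Ω | b ∈ β ∧ a ⊆ b} with h2 | ⟨b₀, hb₀, hab⟩
      · rw [h, h2]
      · exact (main a' ha' a ha b₀ hb₀ hab).symm
    · exact main a ha a' ha' b₀ hb₀ hab
  · -- second statement
    have main : ∀ b ∈ β, ∀ b' ∈ β, ∀ a₀ ∈ α, a₀ ⊆ b' →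
        {a : Set Ω | a ∈ α ∧ a ⊆ b}.ncard = {a : Set Ω | a ∈ α ∧ a ⊆ b'}.ncard := by
      intro b hb b' hb' a₀ ha₀ hab
      have htri : IsTriangle b' a₀ b' :=
        ⟨Set.subset_union_right, hab.trans Set.subset_union_right, Set.subset_union_left⟩
      have hc := hreg β hβ α hα β hβ b hb b' hb' b' a₀ b' htri
      rwa [key2 α β b a₀ b' (fun a ha => hcards α hα a ha a₀ ha₀)
          (fun c hc => hcards β hβ c hc b' hb') hb hab,
        key2 α β b' a₀ b' (fun a ha => hcards α hα a ha a₀ ha₀)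
          (fun c hc => hcards β hβ c hc b' hb') hb' hab] at hc
    intro b hb b' hb'
    rcases Set.eq_empty_or_nonempty {a : Set Ω | a ∈ α ∧ a ⊆ b'} with h | ⟨a₀, ha₀, hab⟩
    · rcases Set.eq_empty_or_nonempty {a : Set Ω | a ∈ α ∧ a ⊆ b} with h2 | ⟨a₀, ha₀, hab⟩
      · rw [h, h2]
      · exact (main b' hb' b hb a₀ ha₀ hab).symm
    · exact main b hb b' hb' a₀ ha₀ hab

end Paper
end

section
/- Let m, d ≥ 1 and let 𝔖 be a set association scheme on Ω = [d]. Then 𝔛 = [m]^𝔖 is an association scheme on [m]^d, and T_m^d ≤ 𝔛 ≤ Ham(m, d). -/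
namespace Paper


def diag (V : Type*) : Set (V × V) := {p | p.1 = p.2}

def IsCoherent {V : Type*} (X : Set (Set (V × V))) : Prop :=
  ∀ R ∈ X, ∀ S ∈ X, ∀ T ∈ X, ∃ p : ℕ, ∀ q : V × V, q ∈ R →
    {w : V | (q.1, w) ∈ S ∧ (w, q.2) ∈ T}.ncard = p

def IsAssocScheme {V : Type*} (X : Set (Set (V × V))) : Prop :=
  Setoid.IsPartition X ∧ diag V ∈ X ∧
  (∀ R ∈ X, ∀ x y : V, (x, y) ∈ R → (y, x) ∈ R) ∧ IsCoherent X

def cellGraph {V : Type*} (R : Set (V × V)) : SimpleGraph V :=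
  SimpleGraph.fromRel (fun x y => (x, y) ∈ R)

def IsPrimitiveScheme {V : Type*} (X : Set (Set (V × V))) : Prop :=
  ∀ R ∈ X, R ≠ diag V → (cellGraph R).Connected

def schemeAut {V : Type*} (X : Set (Set (V × V))) : Subgroup (Equiv.Perm V) where
  carrier := {g | ∀ R ∈ X, ∀ x y : V, (x, y) ∈ R ↔ (g x, g y) ∈ R}
  one_mem' := by intro R _ x y; simp
  mul_mem' := by
    intro g h hg hh R hR x y
    have := (hh R hR x y).trans (hg R hR (h x) (h y))
    simpa using this
  inv_mem' := by
    intro g hg R hR x y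
    have := (hg R hR (g⁻¹ x) (g⁻¹ y)).symm
    simpa using this

def diffSet {m d : ℕ} (p : (Fin d → Fin m) × (Fin d → Fin m)) : Set (Fin d) :=
  {i | p.1 i ≠ p.2 i}

def relOf (m d : ℕ) (α : Set (Set (Fin d))) : Set ((Fin d → Fin m) × (Fin d → Fin m)) :=
  {p | diffSet p ∈ α}

def mPow (m d : ℕ) (S : Set (Set (Set (Fin d)))) :
    Set (Set ((Fin d → Fin m) × (Fin d → Fin m))) :=
  {R | R.Nonempty ∧ ∃ α ∈ S, R = relOf m d α}

def tensorTrivial (m d : ℕ) : Set (Set ((Fin d → Fin m) × (Fin d → Fin m))) :=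
  {R | R.Nonempty ∧ ∃ a : Set (Fin d), R = {p | diffSet p = a}}

def hammingScheme (m d : ℕ) : Set (Set ((Fin d → Fin m) × (Fin d → Fin m))) :=
  {R | R.Nonempty ∧ ∃ t : ℕ, R = {p | (diffSet p).ncard = t}}

def Refines {W : Type*} (X X' : Set (Set W)) : Prop :=
  ∀ R ∈ X, ∃ R' ∈ X', R ⊆ R'


def Nval (m : ℕ) : ℕ × ℕ × ℕ × ℕ × ℕ × ℕ × ℕ → ℕ
  | (na, nb, nc, nab, nac, nbc, nabc) =>
    if na + nabc = nab + nac ∧ nb + nabc = nab + nbc ∧ nc + nabc = nac + nbc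
    then (m - 1) ^ (nbc - nabc) * (m - 2) ^ nabc else 0

section Helpers
variable {Ω : Type*} [Finite Ω]

lemma ncard_cond_iff (a b c : Set Ω) :
    a.ncard + (a ∩ b ∩ c).ncard = (a ∩ b).ncard + (a ∩ c).ncard ↔ a ⊆ b ∪ c := by
  have hu : (a ∩ b) ∪ (a ∩ c) = a ∩ (b ∪ c) := (Set.inter_union_distrib_left a b c).symm
  have hi : (a ∩ b) ∩ (a ∩ c) = a ∩ b ∩ c := by ext x; simp only [Set.mem_inter_iff]; tauto
  have h := Set.ncard_union_add_ncard_inter (a ∩ b) (a ∩ c) (Set.toFinite _) (Set.toFinite _)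
  rw [hu, hi] at h
  constructor
  · intro hcond
    have hle : a.ncard ≤ (a ∩ (b ∪ c)).ncard := by omega
    have heq := Set.eq_of_subset_of_ncard_le (Set.inter_subset_left) hle (Set.toFinite a)
    exact Set.inter_eq_left.mp heq
  · intro hsub
    have : a ∩ (b ∪ c) = a := Set.inter_eq_left.mpr hsub
    rw [this] at h
    omega

lemma compat_iff_triangle (a b c : Set Ω) :
    (a.ncard + (a ∩ b ∩ c).ncard = (a ∩ b).ncard + (a ∩ c).ncard ∧
     b.ncard + (a ∩ b ∩ c).ncard = (a ∩ b).ncard + (b ∩ c).ncard ∧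
     c.ncard + (a ∩ b ∩ c).ncard = (a ∩ c).ncard + (b ∩ c).ncard) ↔ IsTriangle a b c := by
  have h1 := ncard_cond_iff a b c
  have h2 := ncard_cond_iff b a c
  have h3 := ncard_cond_iff c a b
  have e2 : b ∩ a ∩ c = a ∩ b ∩ c := by ext x; simp only [Set.mem_inter_iff]; tauto
  have e2' : b ∩ a = a ∩ b := Set.inter_comm b a
  have e3 : c ∩ a ∩ b = a ∩ b ∩ c := by ext x; simp only [Set.mem_inter_iff]; tauto
  have e3' : c ∩ a = a ∩ c := Set.inter_comm c a
  have e3'' : c ∩ b = b ∩ c := Set.inter_comm c b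
  rw [e2, e2'] at h2
  rw [e3, e3', e3''] at h3
  unfold IsTriangle
  rw [← h1, ← h2, ← h3]

lemma Nval_tripleType_pos_iff (m : ℕ) (a b c : Set Ω) :
    Nval m (tripleType a b c) ≠ 0 → IsTriangle a b c := by
  intro h
  rw [← compat_iff_triangle]
  by_contra hc
  simp only [Nval, tripleType] at h
  exact h (if_neg hc)

lemma Nval_tripleType_of_triangle (m : ℕ) (a b c : Set Ω) (h : IsTriangle a b c) :
    Nval m (tripleType a b c)
      = (m - 1) ^ ((b ∩ c).ncard - (a ∩ b ∩ c).ncard) * (m - 2) ^ (a ∩ b ∩ c).ncard := by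
  simp only [Nval, tripleType]
  exact if_pos ((compat_iff_triangle a b c).mpr h)

end Helpers


open Classical in
lemma coord_count {m d : ℕ} (u v : Fin d → Fin m) (b c : Set (Fin d))
    (htri : IsTriangle (diffSet (u, v)) b c) (i : Fin d) :
    ({x : Fin m | ((u i ≠ x) ↔ i ∈ b) ∧ ((x ≠ v i) ↔ i ∈ c)}).ncard
      = (if i ∈ diffSet (u, v) ∩ (b ∩ c) then m - 2 else 1) *
        (if i ∈ (b ∩ c) \ diffSet (u, v) then m - 1 else 1) := by
  classical
  set a : Set (Fin d) := diffSet (u, v) with ha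
  have hamem : ∀ j, j ∈ a ↔ u j ≠ v j := fun j => Iff.rfl
  by_cases hib : i ∈ b <;> by_cases hic : i ∈ c
  · by_cases hia : i ∈ a
    · have huv : u i ≠ v i := (hamem i).mp hia
      have hQ : {x : Fin m | ((u i ≠ x) ↔ i ∈ b) ∧ ((x ≠ v i) ↔ i ∈ c)}
          = ({u i, v i} : Set (Fin m))ᶜ := by
        ext x
        simp only [Set.mem_setOf_eq, Set.mem_compl_iff, Set.mem_insert_iff,
          Set.mem_singleton_iff, hib, hic, iff_true]
        constructor
        · rintro ⟨h1, h2⟩ (rfl | rfl)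
          · exact h1 rfl
          · exact h2 rfl
        · intro h; push_neg at h; exact ⟨fun hx => h.1 hx.symm, h.2⟩
      rw [hQ]
      have h1 := Set.ncard_add_ncard_compl ({u i, v i} : Set (Fin m))
      rw [Set.ncard_pair huv] at h1
      have hm : Nat.card (Fin m) = m := by simp
      have hv : (({u i, v i} : Set (Fin m))ᶜ).ncard = m - 2 := by omega
      rw [hv]
      simp [Set.mem_inter_iff, Set.mem_diff, hia, hib, hic]
    · have huv : u i = v i := by
        by_contra h; exact hia ((hamem i).mpr h)
      have hQ : {x : Fin m | ((u i ≠ x) ↔ i ∈ b) ∧ ((x ≠ v i) ↔ i ∈ c)}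
          = ({u i} : Set (Fin m))ᶜ := by
        ext x
        simp only [Set.mem_setOf_eq, Set.mem_compl_iff, Set.mem_singleton_iff, hib, hic,
          iff_true, ← huv]
        constructor
        · rintro ⟨h1, _⟩ rfl; exact h1 rfl
        · intro h; exact ⟨fun hx => h hx.symm, h⟩
      rw [hQ]
      have h1 := Set.ncard_add_ncard_compl ({u i} : Set (Fin m))
      rw [Set.ncard_singleton] at h1
      have hm : Nat.card (Fin m) = m := by simp
      have hv : (({u i} : Set (Fin m))ᶜ).ncard = m - 1 := by omega
      rw [hv]
      simp [Set.mem_inter_iff, Set.mem_diff, hia, hib, hic]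
  · have hia : i ∈ a := by
      rcases htri.2.1 hib with h | h
      · exact h
      · exact absurd h hic
    have huv : u i ≠ v i := (hamem i).mp hia
    have hQ : {x : Fin m | ((u i ≠ x) ↔ i ∈ b) ∧ ((x ≠ v i) ↔ i ∈ c)}
        = ({v i} : Set (Fin m)) := by
      ext x
      simp only [Set.mem_setOf_eq, Set.mem_singleton_iff, hib, hic, iff_true, iff_false,
        not_not]
      constructor
      · rintro ⟨_, h2⟩; exact h2
      · rintro rfl; exact ⟨huv, rfl⟩
    rw [hQ, Set.ncard_singleton]
    simp [Set.mem_inter_iff, Set.mem_diff, hib, hic]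
  · have hia : i ∈ a := by
      rcases htri.2.2 hic with h | h
      · exact h
      · exact absurd h hib
    have huv : u i ≠ v i := (hamem i).mp hia
    have hQ : {x : Fin m | ((u i ≠ x) ↔ i ∈ b) ∧ ((x ≠ v i) ↔ i ∈ c)}
        = ({u i} : Set (Fin m)) := by
      ext x
      simp only [Set.mem_setOf_eq, Set.mem_singleton_iff, hib, hic, iff_false, not_not,
        iff_true]
      constructor
      · rintro ⟨h1, _⟩; exact h1.symm
      · rintro rfl; exact ⟨rfl, fun h => huv (by rw [h])⟩
    rw [hQ, Set.ncard_singleton]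
    simp [Set.mem_inter_iff, Set.mem_diff, hib, hic]
  · have hia : i ∉ a := by
      intro hia
      rcases htri.1 hia with h | h
      · exact hib h
      · exact hic h
    have huv : u i = v i := by
      by_contra h; exact hia ((hamem i).mpr h)
    have hQ : {x : Fin m | ((u i ≠ x) ↔ i ∈ b) ∧ ((x ≠ v i) ↔ i ∈ c)}
        = ({u i} : Set (Fin m)) := by
      ext x
      simp only [Set.mem_setOf_eq, Set.mem_singleton_iff, hib, hic, iff_false, not_not]
      constructor
      · rintro ⟨h1, _⟩; exact h1.symm
      · rintro rfl; exact ⟨rfl, huv⟩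
    rw [hQ, Set.ncard_singleton]
    simp [Set.mem_inter_iff, Set.mem_diff, hib, hic]

lemma count_pair (m d : ℕ) (u v : Fin d → Fin m) (b c : Set (Fin d)) :
    {w : Fin d → Fin m | diffSet (u, w) = b ∧ diffSet (w, v) = c}.ncard
      = Nval m (tripleType (diffSet (u, v)) b c) := by
  classical
  set a : Set (Fin d) := diffSet (u, v) with ha
  by_cases htri : IsTriangle a b c
  · have hset : {w : Fin d → Fin m | diffSet (u, w) = b ∧ diffSet (w, v) = c}
        = {w : Fin d → Fin m | ∀ i, ((u i ≠ w i) ↔ i ∈ b) ∧ ((w i ≠ v i) ↔ i ∈ c)} := by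
      ext w
      simp only [Set.mem_setOf_eq, diffSet, Set.ext_iff, Set.mem_setOf_eq]
      constructor
      · rintro ⟨h1, h2⟩ i; exact ⟨h1 i, h2 i⟩
      · intro h; exact ⟨fun i => (h i).1, fun i => (h i).2⟩
    rw [hset]
    have hcard : {w : Fin d → Fin m | ∀ i, ((u i ≠ w i) ↔ i ∈ b) ∧ ((w i ≠ v i) ↔ i ∈ c)}.ncard
        = ∏ i : Fin d, ({x : Fin m | ((u i ≠ x) ↔ i ∈ b) ∧ ((x ≠ v i) ↔ i ∈ c)}).ncard := by
      rw [← Nat.card_coe_set_eq]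
      have e : {w : Fin d → Fin m | ∀ i, ((u i ≠ w i) ↔ i ∈ b) ∧ ((w i ≠ v i) ↔ i ∈ c)}
          ≃ ∀ i, {x : Fin m // ((u i ≠ x) ↔ i ∈ b) ∧ ((x ≠ v i) ↔ i ∈ c)} :=
        Equiv.subtypePiEquivPi (p := fun i x => ((u i ≠ x) ↔ i ∈ b) ∧ ((x ≠ v i) ↔ i ∈ c))
      rw [Nat.card_congr e, Nat.card_pi]
      rfl
    rw [hcard]
    calc ∏ i : Fin d, ({x : Fin m | ((u i ≠ x) ↔ i ∈ b) ∧ ((x ≠ v i) ↔ i ∈ c)}).ncard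
        = ∏ i : Fin d, ((if i ∈ a ∩ (b ∩ c) then m - 2 else 1) *
            (if i ∈ (b ∩ c) \ a then m - 1 else 1)) :=
          Finset.prod_congr rfl (fun i _ => coord_count u v b c htri i)
      _ = (∏ i : Fin d, (if i ∈ (a ∩ (b ∩ c)).toFinset then m - 2 else 1)) *
            (∏ i : Fin d, (if i ∈ ((b ∩ c) \ a).toFinset then m - 1 else 1)) := by
          rw [← Finset.prod_mul_distrib]
          exact Finset.prod_congr rfl (fun i _ => by simp [Set.mem_toFinset])
      _ = (m - 2) ^ (a ∩ (b ∩ c)).toFinset.card * (m - 1) ^ ((b ∩ c) \ a).toFinset.card := by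
          rw [Fintype.prod_ite_mem, Fintype.prod_ite_mem, Finset.prod_const, Finset.prod_const]
      _ = Nval m (tripleType a b c) := by
          rw [Nval_tripleType_of_triangle m a b c htri]
          have e1 : a ∩ (b ∩ c) = a ∩ b ∩ c := (Set.inter_assoc a b c).symm
          have e2 : (b ∩ c) \ a = (b ∩ c) \ (a ∩ b ∩ c) := by
            ext x
            simp only [Set.mem_diff, Set.mem_inter_iff]
            tauto
          rw [← Set.ncard_eq_toFinset_card', ← Set.ncard_eq_toFinset_card', e1, e2,
            Set.ncard_diff (by intro x hx; exact ⟨hx.1.2, hx.2⟩) (Set.toFinite _)]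
          ring
  · have hempty : {w : Fin d → Fin m | diffSet (u, w) = b ∧ diffSet (w, v) = c} = ∅ := by
      ext w
      simp only [Set.mem_setOf_eq, Set.mem_empty_iff_false, iff_false]
      rintro ⟨rfl, rfl⟩
      refine htri ⟨?_, ?_, ?_⟩ <;> intro i hi <;>
        simp only [diffSet, Set.mem_setOf_eq, Set.mem_union, ha] at hi ⊢
      · by_cases h : u i = w i
        · exact Or.inr (fun hh => hi (h.trans hh))
        · exact Or.inl h
      · by_cases h : u i = v i
        · exact Or.inr (fun hh => hi (h.trans hh.symm))
        · exact Or.inl h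
      · by_cases h : u i = v i
        · exact Or.inr (fun hh => hi (hh.symm.trans h))
        · exact Or.inl h
    rw [hempty, Set.ncard_empty]
    symm
    simp only [Nval, tripleType]
    exact if_neg (fun hcond => htri ((compat_iff_triangle a b c).mp hcond))


open Classical in
lemma cnt_eq (m d : ℕ) (β γ : Set (Set (Fin d))) (u v : Fin d → Fin m) :
    {w : Fin d → Fin m | diffSet (u, w) ∈ β ∧ diffSet (w, v) ∈ γ}.ncard
      = ∑ p ∈ β.toFinset ×ˢ γ.toFinset, Nval m (tripleType (diffSet (u, v)) p.1 p.2) := by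
  classical
  rw [Set.ncard_eq_toFinset_card']
  rw [Finset.card_eq_sum_card_fiberwise
    (f := fun w => (diffSet (u, w), diffSet (w, v))) (t := β.toFinset ×ˢ γ.toFinset)
    (fun w hw => by
      simp only [Finset.mem_coe, Set.mem_toFinset, Set.mem_setOf_eq] at hw
      simp [Finset.mem_product, Set.mem_toFinset, hw.1, hw.2])]
  refine Finset.sum_congr rfl (fun p hp => ?_)
  simp only [Finset.mem_product, Set.mem_toFinset] at hp
  have hfil : ({w : Fin d → Fin m | diffSet (u, w) ∈ β ∧ diffSet (w, v) ∈ γ}.toFinset.filter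
      (fun w => (diffSet (u, w), diffSet (w, v)) = p))
      = {w : Fin d → Fin m | diffSet (u, w) = p.1 ∧ diffSet (w, v) = p.2}.toFinset := by
    ext w
    simp only [Finset.mem_filter, Set.mem_toFinset, Set.mem_setOf_eq, Prod.ext_iff]
    constructor
    · rintro ⟨_, h⟩; exact h
    · rintro ⟨h1, h2⟩; exact ⟨⟨h1 ▸ hp.1, h2 ▸ hp.2⟩, h1, h2⟩
  rw [hfil, ← Set.ncard_eq_toFinset_card', count_pair]

open Classical in
lemma sum_regroup (m d : ℕ) (β γ : Set (Set (Fin d))) (a : Set (Fin d))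
    (T : Finset (ℕ × ℕ × ℕ × ℕ × ℕ × ℕ × ℕ))
    (hT : (β.toFinset ×ˢ γ.toFinset).image (fun p => tripleType a p.1 p.2) ⊆ T) :
    ∑ p ∈ β.toFinset ×ˢ γ.toFinset, Nval m (tripleType a p.1 p.2)
      = ∑ τ ∈ T, typeCount β γ a τ * Nval m τ := by
  classical
  have htc : ∀ τ, typeCount β γ a τ
      = ((β.toFinset ×ˢ γ.toFinset).filter (fun p => tripleType a p.1 p.2 = τ)).card := by
    intro τ
    rw [typeCount, Set.ncard_eq_toFinset_card']
    congr 1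
    ext p
    simp only [Set.mem_toFinset, Finset.mem_filter, Finset.mem_product, Set.mem_setOf_eq]
    tauto
  have hsc := Finset.sum_comp (M := ℕ) (s := β.toFinset ×ˢ γ.toFinset) (Nval m)
    (fun p => tripleType a p.1 p.2)
  refine hsc.trans ?_
  rw [Finset.sum_subset hT]
  · exact Finset.sum_congr rfl (fun τ _ => by rw [htc τ, smul_eq_mul])
  · intro τ _ hτ
    have : ((β.toFinset ×ˢ γ.toFinset).filter (fun p => tripleType a p.1 p.2 = τ)) = ∅ := by
      rw [Finset.filter_eq_empty_iff]
      intro p hp heq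
      exact hτ (Finset.mem_image.mpr ⟨p, hp, heq⟩)
    rw [this]
    simp


theorem stmt4 (m d : ℕ) (hm : 1 ≤ m) (hd : 1 ≤ d)
    (S : Set (Set (Set (Fin d)))) (hS : IsSAS S) :
    IsAssocScheme (mPow m d S) ∧
    Refines (tensorTrivial m d) (mPow m d S) ∧
    Refines (mPow m d S) (hammingScheme m d) := by
  classical
  obtain ⟨α₀, ⟨hα₀, hEmpty⟩, -⟩ := hS.1.2 (∅ : Set (Fin d))
  have hdiag : diag (Fin d → Fin m) = relOf m d α₀ := by
    ext p
    simp only [diag, relOf, Set.mem_setOf_eq]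
    constructor
    · intro h
      have he : diffSet p = ∅ := by
        ext i; simp [diffSet, h]
      rw [he]; exact hEmpty
    · intro h
      have h0 : (diffSet p).ncard = 0 := by
        rw [hS.2.1 α₀ hα₀ _ h ∅ hEmpty, Set.ncard_empty]
      have he : diffSet p = ∅ := (Set.ncard_eq_zero (Set.toFinite _)).mp h0
      funext i
      by_contra hne
      exact Set.eq_empty_iff_forall_notMem.mp he i hne
  refine ⟨⟨⟨?_, ?_⟩, ?_, ?_, ?_⟩, ?_, ?_⟩
  · rintro ⟨hne, -⟩
    exact Set.not_nonempty_empty hne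
  · intro p
    obtain ⟨α, ⟨hα, hpα⟩, huniq⟩ := hS.1.2 (diffSet p)
    refine ⟨relOf m d α, ⟨⟨⟨p, hpα⟩, α, hα, rfl⟩, hpα⟩, ?_⟩
    rintro y ⟨⟨-, α', hα', rfl⟩, hpy⟩
    rw [huniq α' ⟨hα', hpy⟩]
  · rw [hdiag]
    refine ⟨⟨((fun _ => ⟨0, hm⟩), (fun _ => ⟨0, hm⟩)), ?_⟩, α₀, hα₀, rfl⟩
    have he : diffSet (((fun _ => ⟨0, hm⟩) : Fin d → Fin m), (fun _ => ⟨0, hm⟩)) = ∅ := by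
      ext i; simp [diffSet]
    show diffSet _ ∈ α₀
    rw [he]; exact hEmpty
  · rintro R ⟨-, α, hα, rfl⟩ x y hxy
    have he : diffSet (y, x) = diffSet (x, y) := by
      ext i; simp [diffSet, ne_comm]
    show diffSet (y, x) ∈ α
    rw [he]; exact hxy
  · -- coherence
    rintro R ⟨hRne, α, hα, rfl⟩ S' ⟨-, β, hβ, rfl⟩ T ⟨-, γ, hγ, rfl⟩
    obtain ⟨⟨u₀, v₀⟩, hq₀⟩ := hRne
    refine ⟨{w : Fin d → Fin m | diffSet (u₀, w) ∈ β ∧ diffSet (w, v₀) ∈ γ}.ncard, ?_⟩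
    rintro ⟨u, v⟩ hq
    simp only [relOf, Set.mem_setOf_eq]
    have ha : diffSet (u, v) ∈ α := hq
    have ha₀ : diffSet (u₀, v₀) ∈ α := hq₀
    rw [cnt_eq, cnt_eq]
    set a : Set (Fin d) := diffSet (u, v) with haa
    set a₀ : Set (Fin d) := diffSet (u₀, v₀) with haa₀
    set T : Finset (ℕ × ℕ × ℕ × ℕ × ℕ × ℕ × ℕ) :=
      (β.toFinset ×ˢ γ.toFinset).image (fun p => tripleType a p.1 p.2) ∪
        (β.toFinset ×ˢ γ.toFinset).image (fun p => tripleType a₀ p.1 p.2) with hTdef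
    rw [sum_regroup m d β γ a T Finset.subset_union_left,
      sum_regroup m d β γ a₀ T Finset.subset_union_right]
    refine Finset.sum_congr rfl (fun τ hτ => ?_)
    by_cases hz : Nval m τ = 0
    · rw [hz, mul_zero, mul_zero]
    · have hex : ∃ x b c : Set (Fin d), τ = tripleType x b c := by
        rcases Finset.mem_union.mp hτ with h | h <;>
          obtain ⟨p, -, hpe⟩ := Finset.mem_image.mp h
        · exact ⟨a, p.1, p.2, hpe.symm⟩
        · exact ⟨a₀, p.1, p.2, hpe.symm⟩
      obtain ⟨x, b, c, rfl⟩ := hex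
      have htri : IsTriangle x b c := Nval_tripleType_pos_iff m x b c hz
      rw [hS.2.2 α hα β hβ γ hγ a ha a₀ ha₀ x b c htri]
  · -- tensorTrivial refines mPow
    rintro R ⟨⟨p₀, hp₀⟩, e, rfl⟩
    simp only [Set.mem_setOf_eq] at hp₀
    obtain ⟨α, ⟨hα, heα⟩, -⟩ := hS.1.2 e
    refine ⟨relOf m d α, ⟨⟨p₀, ?_⟩, α, hα, rfl⟩, ?_⟩
    · show diffSet p₀ ∈ α
      rw [hp₀]; exact heα
    · intro p hp
      simp only [Set.mem_setOf_eq] at hp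
      show diffSet p ∈ α
      rw [hp]; exact heα
  · -- mPow refines hammingScheme
    rintro R ⟨⟨p₀, hp₀⟩, α, hα, rfl⟩
    refine ⟨{p | (diffSet p).ncard = (diffSet p₀).ncard}, ⟨⟨p₀, rfl⟩, (diffSet p₀).ncard, rfl⟩, ?_⟩
    intro p hp
    exact hS.2.1 α hα (diffSet p) hp (diffSet p₀) hp₀

end Paper
end

section
/- Let d ≥ 1 and m ≥ 3^d + 4. If 𝔛 is an association scheme on [m]^d with T_m^d ≤ 𝔛 ≤ Ham(m, d), then 𝔛 = [m]^𝔖 for some set association scheme 𝔖 on [d]. -/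
namespace Paper

open Finset


lemma subset_iff_ncard {d : ℕ} (a b c : Set (Fin d)) :
    a ⊆ b ∪ c ↔ (a ∩ b).ncard + (a ∩ c).ncard = a.ncard + (a ∩ b ∩ c).ncard := by
  have h1 : (a ∩ b ∪ a ∩ c).ncard + (a ∩ b ∩ (a ∩ c)).ncard = (a ∩ b).ncard + (a ∩ c).ncard :=
    Set.ncard_union_add_ncard_inter _ _ (Set.toFinite _) (Set.toFinite _)
  have h2 : a ∩ b ∩ (a ∩ c) = a ∩ b ∩ c := by ext i; simp; tauto
  have h3 : a ∩ b ∪ a ∩ c = a ∩ (b ∪ c) := by ext i; simp; tauto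
  rw [h2, h3] at h1
  constructor
  · intro h
    have hset : a ∩ (b ∪ c) = a := by ext i; simp; intro hi; exact h hi
    rw [hset] at h1; omega
  · intro h
    have hle : a.ncard ≤ (a ∩ (b ∪ c)).ncard := by omega
    have := Set.eq_of_subset_of_ncard_le Set.inter_subset_left hle (Set.toFinite _)
    intro i hi
    have h5 : i ∈ a ∩ (b ∪ c) := by rw [this]; exact hi
    exact h5.2

lemma tri_stats {d : ℕ} {a b c : Set (Fin d)} (h : IsTriangle a b c) :
    (a ∩ b).ncard + ((b ∩ c) \ a).ncard = b.ncard ∧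
    (a ∩ c).ncard + ((b ∩ c) \ a).ncard = c.ncard ∧
    (b ∩ c).ncard = ((b ∩ c) \ a).ncard + (a ∩ b ∩ c).ncard ∧
    2 * ((b ∩ c) \ a).ncard + (a ∩ b ∩ c).ncard + a.ncard = b.ncard + c.ncard := by
  obtain ⟨h1, h2, h3⟩ := h
  have E1 := (subset_iff_ncard a b c).mp h1
  have E2 := (subset_iff_ncard b a c).mp h2
  have E3 := (subset_iff_ncard c a b).mp h3
  have e2a : b ∩ a = a ∩ b := Set.inter_comm _ _
  have e2b : b ∩ a ∩ c = a ∩ b ∩ c := by ext i; simp; tauto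
  have e3a : c ∩ a = a ∩ c := Set.inter_comm _ _
  have e3b : c ∩ b = b ∩ c := Set.inter_comm _ _
  have e3c : c ∩ a ∩ b = a ∩ b ∩ c := by ext i; simp; tauto
  rw [e2b, e2a] at E2
  rw [e3c, e3a, e3b] at E3
  have E4 : (b ∩ c ∩ a).ncard + ((b ∩ c) \ a).ncard = (b ∩ c).ncard :=
    Set.ncard_inter_add_ncard_diff_eq_ncard _ _ (Set.toFinite _)
  have e4 : b ∩ c ∩ a = a ∩ b ∩ c := by ext i; simp; tauto
  rw [e4] at E4
  omega

lemma geom (B : ℕ) : ∀ (n : ℕ) (v : ℕ → ℕ), (∀ t < n + 1, 0 < v t) →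
    (∀ t, t + 1 ≤ n → (B + 1) * v (t + 1) < v t) →
    B * (∑ t ∈ range n, v (t + 1)) < v 0 := by
  intro n
  induction n with
  | zero => intro v hv _; simpa using hv 0 (by omega)
  | succ n ih =>
    intro v hv hch
    have h1 : B * ∑ t ∈ range n, v (t + 1 + 1) < v 1 := by
      simpa using ih (fun t => v (t + 1)) (fun t ht => hv (t + 1) (by omega))
        (fun t ht => hch (t + 1) (by omega))
    have h2 : (B + 1) * v 1 < v 0 := hch 0 (by omega)
    have e : (B + 1) * v 1 = B * v 1 + v 1 := by ring
    calc B * ∑ t ∈ range (n + 1), v (t + 1)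
        = B * v 1 + B * ∑ t ∈ range n, v (t + 1 + 1) := by
          rw [Finset.sum_range_succ' (fun t => v (t + 1)) n]; ring
      _ < v 0 := by omega

lemma digit (B : ℕ) : ∀ (n : ℕ) (v : ℕ → ℕ) (D : ℕ → ℤ), (∀ t < n, 0 < v t) →
    (∀ t, t + 1 < n → (B + 1) * v (t + 1) < v t) →
    (∀ t < n, |D t| ≤ (B : ℤ)) →
    (∑ t ∈ range n, D t * v t = 0) → ∀ t < n, D t = 0 := by
  intro n
  induction n with
  | zero => intro v D _ _ _ _ t ht; omega
  | succ n ih =>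
    intro v D hv hch hb hsum
    have hshift : ∑ t ∈ range (n + 1), D t * v t
        = (∑ t ∈ range n, D (t + 1) * v (t + 1)) + D 0 * v 0 :=
      Finset.sum_range_succ' (fun t => D t * v t) n
    have habs : |∑ t ∈ range n, D (t + 1) * v (t + 1)| ≤ (B : ℤ) * ∑ t ∈ range n, (v (t + 1) : ℤ) := by
      calc |∑ t ∈ range n, D (t + 1) * v (t + 1)| ≤ ∑ t ∈ range n, |D (t + 1) * v (t + 1)| :=
            Finset.abs_sum_le_sum_abs _ _
        _ ≤ ∑ t ∈ range n, (B : ℤ) * v (t + 1) := by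
            apply Finset.sum_le_sum
            intro t ht
            rw [abs_mul, abs_of_nonneg (by positivity : (0:ℤ) ≤ (v (t+1) : ℤ))]
            exact mul_le_mul_of_nonneg_right (hb (t + 1) (by simp at ht; omega)) (by positivity)
        _ = (B : ℤ) * ∑ t ∈ range n, (v (t + 1) : ℤ) := by rw [Finset.mul_sum]
    have hgeom : (B : ℤ) * ∑ t ∈ range n, (v (t + 1) : ℤ) < v 0 := by
      have := geom B n v (fun t ht => hv t ht) (fun t ht => hch t (by omega))
      push_cast [← Nat.cast_sum]
      exact_mod_cast this
    have hD0 : D 0 = 0 := by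
      have h0 : D 0 * v 0 = -∑ t ∈ range n, D (t + 1) * v (t + 1) := by omega
      have : |D 0 * v 0| < (v 0 : ℤ) := by
        rw [h0, abs_neg]; exact lt_of_le_of_lt habs hgeom
      rw [abs_mul, abs_of_nonneg (by positivity : (0:ℤ) ≤ (v 0 : ℤ))] at this
      have hv0 : (0:ℤ) < v 0 := by exact_mod_cast hv 0 (by omega)
      rcases eq_or_ne (D 0) 0 with h | h
      · exact h
      · exfalso
        have h1 : (1 : ℤ) ≤ |D 0| := Int.one_le_abs (by simpa using h)
        nlinarith
    have htail : ∑ t ∈ range n, D (t + 1) * v (t + 1) = 0 := by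
      rw [hshift, hD0] at hsum; simpa using hsum
    have := ih (fun t => v (t + 1)) (fun t => D (t + 1)) (fun t ht => hv (t + 1) (by omega))
      (fun t ht => hch (t + 1) (by omega)) (fun t ht => hb (t + 1) (by omega)) htail
    intro t ht
    cases t with
    | zero => exact hD0
    | succ t => exact this t (by omega)




open Classical in
noncomputable def wt (m : ℕ) {d : ℕ} (a b c : Set (Fin d)) : ℕ :=
  if IsTriangle a b c then (m - 1) ^ (((b ∩ c) \ a).ncard) * (m - 2) ^ ((a ∩ b ∩ c).ncard) else 0

lemma tcell_nonempty {d : ℕ} (m : ℕ) (hm : 2 ≤ m) (a : Set (Fin d)) :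
    ∃ p : (Fin d → Fin m) × (Fin d → Fin m), diffSet p = a := by
  classical
  refine ⟨⟨fun _ => ⟨0, by omega⟩, fun i => if i ∈ a then ⟨1, by omega⟩ else ⟨0, by omega⟩⟩, ?_⟩
  ext i
  by_cases hi : i ∈ a <;> simp [diffSet, hi, Fin.ext_iff]

open Classical in
lemma count_w {d : ℕ} (m : ℕ) (u v : Fin d → Fin m) (b c : Set (Fin d)) :
    {w : Fin d → Fin m | diffSet (u, w) = b ∧ diffSet (w, v) = c}.ncard
      = wt m (diffSet (u, v)) b c := by
  set a : Set (Fin d) := diffSet (u, v) with ha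
  have hamem : ∀ i, i ∈ a ↔ u i ≠ v i := fun i => Iff.rfl
  set t : Fin d → Finset (Fin m) :=
    fun i => univ.filter (fun x => ((u i ≠ x) ↔ i ∈ b) ∧ ((x ≠ v i) ↔ i ∈ c)) with htdef
  have hset : {w : Fin d → Fin m | diffSet (u, w) = b ∧ diffSet (w, v) = c}
      = ↑(Fintype.piFinset t) := by
    ext w
    simp only [Set.mem_setOf_eq, Finset.coe_sort_coe, Fintype.mem_piFinset, Finset.mem_coe,
      htdef, Finset.mem_filter, Finset.mem_univ, true_and]
    rw [Set.ext_iff, Set.ext_iff]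
    constructor
    · intro ⟨h1, h2⟩ i; exact ⟨h1 i, h2 i⟩
    · intro h; exact ⟨fun i => (h i).1, fun i => (h i).2⟩
  rw [hset, Set.ncard_coe_finset, Fintype.card_piFinset]
  by_cases htri : IsTriangle a b c
  · have hcard : ∀ i, (t i).card
        = (if i ∈ (b ∩ c) \ a then m - 1 else 1) * (if i ∈ a ∩ b ∩ c then m - 2 else 1) := by
      intro i
      by_cases hia : i ∈ a <;> by_cases hib : i ∈ b <;> by_cases hic : i ∈ c
      · -- i∈a,b,c : m-2
        have hne : u i ≠ v i := (hamem i).mp hia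
        have : t i = ({u i, v i} : Finset (Fin m))ᶜ := by
          ext x
          simp [htdef, hib, hic]
          tauto
        rw [this, Finset.card_compl, Finset.card_insert_of_notMem (by simpa using hne)]
        simp [hia, hib, hic]
      · -- i∈a, i∈b, i∉c: w i = v i
        have hne : u i ≠ v i := (hamem i).mp hia
        have : t i = {v i} := by
          ext x
          simp only [htdef, Finset.mem_filter, Finset.mem_univ, true_and, Finset.mem_singleton,
            hib, hic, iff_true, iff_false, not_not]
          constructor
          · exact fun h => h.2
          · rintro rfl; exact ⟨hne, rfl⟩
        rw [this]
        simp [hia, hic]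
      · -- i∈a, i∉b, i∈c
        have hne : u i ≠ v i := (hamem i).mp hia
        have : t i = {u i} := by
          ext x
          simp only [htdef, Finset.mem_filter, Finset.mem_univ, true_and, Finset.mem_singleton,
            hib, hic, iff_true, iff_false, not_not]
          constructor
          · exact fun h => h.1.symm
          · rintro rfl; exact ⟨rfl, hne⟩
        rw [this]
        simp [hia, hib]
      · -- i∈a, i∉b, i∉c : impossible (a ⊆ b ∪ c)
        exact absurd (htri.1 hia) (by simp [hib, hic])
      · -- i∉a, i∈b, i∈c : m-1
        have heq : u i = v i := by by_contra hne; exact hia ((hamem i).mpr hne)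
        have : t i = ({u i} : Finset (Fin m))ᶜ := by
          ext x
          simp [htdef, hib, hic, heq]
          tauto
        rw [this, Finset.card_compl]
        simp [hia, hib, hic]
      · -- i∉a, i∈b, i∉c : impossible (b ⊆ a ∪ c)
        exact absurd (htri.2.1 hib) (by simp [hia, hic])
      · -- i∉a, i∉b, i∈c : impossible
        exact absurd (htri.2.2 hic) (by simp [hia, hib])
      · -- i∉a,i∉b,i∉c : 1
        have heq : u i = v i := by by_contra hne; exact hia ((hamem i).mpr hne)
        have : t i = {v i} := by
          ext x
          simp [htdef, hib, hic, heq]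
          tauto
        rw [this]
        simp [hia, hib, hic]
    rw [Finset.prod_congr rfl (fun i _ => hcard i), Finset.prod_mul_distrib]
    have hpow : ∀ (p : Fin d → Prop) (_ : DecidablePred p) (x : ℕ),
        (∏ i : Fin d, if p i then x else 1) = x ^ (univ.filter p).card := by
      intro p inst x
      rw [← Finset.prod_filter, Finset.prod_const]
    have hc : ∀ (S : Set (Fin d)) (inst : DecidablePred (· ∈ S)),
        (univ.filter (· ∈ S)).card = S.ncard := by
      intro S inst
      rw [Set.ncard_eq_toFinset_card']
      congr 1
      ext i
      simp
    rw [hpow _ _ (m - 1), hpow _ _ (m - 2), hc, hc, wt, if_pos htri]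
  · rw [wt, if_neg htri]
    have hbad : ∃ i, (t i).card = 0 := by
      by_cases h1 : a ⊆ b ∪ c
      · by_cases h2 : b ⊆ a ∪ c
        · by_cases h3 : c ⊆ a ∪ b
          · exact absurd ⟨h1, h2, h3⟩ htri
          · obtain ⟨i, hic, hiab⟩ := Set.not_subset.mp h3
            simp only [Set.mem_union, not_or] at hiab
            obtain ⟨hia, hib⟩ := hiab
            have heq : u i = v i := by by_contra hne; exact hia ((hamem i).mpr hne)
            refine ⟨i, Finset.card_eq_zero.mpr (Finset.eq_empty_iff_forall_notMem.mpr ?_)⟩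
            intro x hx
            rw [htdef, Finset.mem_filter] at hx
            obtain ⟨-, e1, e2⟩ := hx
            have hux : u i = x := by by_contra h; exact hib (e1.mp h)
            exact (e2.mpr hic) (by rw [← hux]; exact heq)
        · obtain ⟨i, hib, hiac⟩ := Set.not_subset.mp h2
          simp only [Set.mem_union, not_or] at hiac
          obtain ⟨hia, hic⟩ := hiac
          have heq : u i = v i := by by_contra hne; exact hia ((hamem i).mpr hne)
          refine ⟨i, Finset.card_eq_zero.mpr (Finset.eq_empty_iff_forall_notMem.mpr ?_)⟩
          intro x hx
          rw [htdef, Finset.mem_filter] at hx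
          obtain ⟨-, e1, e2⟩ := hx
          have hxv : x = v i := by by_contra h; exact hic (e2.mp h)
          exact (e1.mpr hib) (by rw [hxv]; exact heq)
      · obtain ⟨i, hia, hibc⟩ := Set.not_subset.mp h1
        simp only [Set.mem_union, not_or] at hibc
        obtain ⟨hib, hic⟩ := hibc
        have hne : u i ≠ v i := (hamem i).mp hia
        refine ⟨i, Finset.card_eq_zero.mpr (Finset.eq_empty_iff_forall_notMem.mpr ?_)⟩
        intro x hx
        rw [htdef, Finset.mem_filter] at hx
        obtain ⟨-, e1, e2⟩ := hx
        have hux : u i = x := by by_contra h; exact hib (e1.mp h)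
        have hxv : x = v i := by by_contra h; exact hic (e2.mp h)
        exact hne (hux.trans hxv)
    obtain ⟨i, hi⟩ := hbad
    exact Finset.prod_eq_zero (Finset.mem_univ i) hi



open Classical in
lemma S1 {d : ℕ} (m : ℕ) (u v : Fin d → Fin m) (β γ : Set (Set (Fin d))) :
    {w : Fin d → Fin m | diffSet (u, w) ∈ β ∧ diffSet (w, v) ∈ γ}.ncard
      = ∑ bc : Set (Fin d) × Set (Fin d),
          (if bc.1 ∈ β ∧ bc.2 ∈ γ then wt m (diffSet (u, v)) bc.1 bc.2 else 0) := by
  classical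
  have hfin : {w : Fin d → Fin m | diffSet (u, w) ∈ β ∧ diffSet (w, v) ∈ γ}.Finite :=
    Set.toFinite _
  rw [Set.ncard_eq_toFinset_card _ hfin]
  have hTo : hfin.toFinset
      = univ.filter (fun w => diffSet (u, w) ∈ β ∧ diffSet (w, v) ∈ γ) := by
    ext w; simp
  rw [hTo]
  rw [Finset.card_eq_sum_card_fiberwise
    (f := fun w => (diffSet (u, w), diffSet (w, v)))
    (t := (univ : Finset (Set (Fin d) × Set (Fin d)))) (fun x _ => Finset.mem_univ _)]
  apply Finset.sum_congr rfl
  intro bc _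
  by_cases hbc : bc.1 ∈ β ∧ bc.2 ∈ γ
  · rw [if_pos hbc, ← count_w m u v bc.1 bc.2]
    have hfin2 : {w : Fin d → Fin m | diffSet (u, w) = bc.1 ∧ diffSet (w, v) = bc.2}.Finite :=
      Set.toFinite _
    rw [Set.ncard_eq_toFinset_card _ hfin2]
    congr 1
    ext w
    simp only [Finset.mem_filter, Finset.mem_univ, true_and, Set.Finite.mem_toFinset,
      Set.mem_setOf_eq]
    constructor
    · rintro ⟨-, h⟩
      exact ⟨congrArg Prod.fst h, congrArg Prod.snd h⟩
    · rintro ⟨h1, h2⟩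
      rw [h1, h2]
      exact ⟨hbc, rfl⟩
  · rw [if_neg hbc]
    rw [Finset.card_eq_zero, Finset.eq_empty_iff_forall_notMem]
    intro w hw
    simp only [Finset.mem_filter, Finset.mem_univ, true_and] at hw
    obtain ⟨⟨m1, m2⟩, heq⟩ := hw
    apply hbc
    rw [← heq]
    exact ⟨m1, m2⟩

open Classical in
noncomputable def Nk {d : ℕ} (β γ : Set (Set (Fin d))) (a : Set (Fin d)) (k : ℕ) : ℕ :=
  (univ.filter (fun bc : Set (Fin d) × Set (Fin d) =>
    bc.1 ∈ β ∧ bc.2 ∈ γ ∧ IsTriangle a bc.1 bc.2 ∧ ((bc.1 ∩ bc.2) \ a).ncard = k)).card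

open Classical in
lemma S2 {d : ℕ} (m : ℕ) (a : Set (Fin d)) (β γ : Set (Set (Fin d))) (Bc Cc : ℕ)
    (hβ : ∀ b ∈ β, Set.ncard b = Bc) (hγ : ∀ c ∈ γ, Set.ncard c = Cc) :
    ∑ bc : Set (Fin d) × Set (Fin d),
        (if bc.1 ∈ β ∧ bc.2 ∈ γ then wt m a bc.1 bc.2 else 0)
      = ∑ k ∈ range (d + 1),
          Nk β γ a k * ((m - 1) ^ k * (m - 2) ^ (Bc + Cc - a.ncard - 2 * k)) := by
  classical
  rw [← Finset.sum_fiberwise_of_maps_to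
    (g := fun bc : Set (Fin d) × Set (Fin d) => ((bc.1 ∩ bc.2) \ a).ncard)
    (t := range (d + 1)) ?hmap]
  case hmap =>
    intro bc _
    rw [Finset.mem_range]
    have : ((bc.1 ∩ bc.2) \ a).ncard ≤ (Set.univ : Set (Fin d)).ncard :=
      Set.ncard_le_ncard (Set.subset_univ _) (Set.toFinite _)
    simpa [Set.ncard_univ] using Nat.lt_succ_of_le this
  apply Finset.sum_congr rfl
  intro k _
  have hsplit : ∀ bc : Set (Fin d) × Set (Fin d), bc ∈ univ.filter
      (fun bc : Set (Fin d) × Set (Fin d) => ((bc.1 ∩ bc.2) \ a).ncard = k) →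
      (if bc.1 ∈ β ∧ bc.2 ∈ γ then wt m a bc.1 bc.2 else 0)
      = (if bc.1 ∈ β ∧ bc.2 ∈ γ ∧ IsTriangle a bc.1 bc.2 ∧ ((bc.1 ∩ bc.2) \ a).ncard = k
          then (m - 1) ^ k * (m - 2) ^ (Bc + Cc - a.ncard - 2 * k) else 0) := by
    intro bc hbc
    simp only [Finset.mem_filter, Finset.mem_univ, true_and] at hbc
    by_cases h1 : bc.1 ∈ β ∧ bc.2 ∈ γ
    · by_cases h2 : IsTriangle a bc.1 bc.2
      · rw [if_pos h1, if_pos ⟨h1.1, h1.2, h2, hbc⟩, wt, if_pos h2]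
        have hT := (tri_stats h2).2.2.2
        rw [hβ bc.1 h1.1, hγ bc.2 h1.2] at hT
        have hw : (a ∩ bc.1 ∩ bc.2).ncard = Bc + Cc - a.ncard - 2 * k := by omega
        rw [hbc, hw]
      · rw [if_pos h1, if_neg (by tauto), wt, if_neg h2]
    · rw [if_neg h1, if_neg (by tauto)]
  rw [Finset.sum_congr rfl hsplit]
  rw [← Finset.sum_filter, Nk]
  rw [Finset.filter_filter]
  have hfe : (univ.filter (fun bc : Set (Fin d) × Set (Fin d) =>
        ((bc.1 ∩ bc.2) \ a).ncard = k ∧ bc.1 ∈ β ∧ bc.2 ∈ γ ∧ IsTriangle a bc.1 bc.2 ∧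
          ((bc.1 ∩ bc.2) \ a).ncard = k))
      = (univ.filter (fun bc : Set (Fin d) × Set (Fin d) =>
        bc.1 ∈ β ∧ bc.2 ∈ γ ∧ IsTriangle a bc.1 bc.2 ∧ ((bc.1 ∩ bc.2) \ a).ncard = k)) := by
    apply Finset.filter_congr
    intro bc _
    tauto
  rw [hfe, Finset.sum_const, smul_eq_mul]

open Classical in
noncomputable def enc {d : ℕ} (a b c : Set (Fin d)) : Fin d → Fin 3 :=
  fun i => if i ∈ a then (if i ∈ b then (if i ∈ c then 0 else 1) else 2)
    else (if i ∈ b then 1 else 0)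

open Classical in
lemma tri_card_le {d : ℕ} (a : Set (Fin d)) :
    (univ.filter (fun bc : Set (Fin d) × Set (Fin d) => IsTriangle a bc.1 bc.2)).card
      ≤ 3 ^ d := by
  classical
  have h3 : (3 : ℕ) ^ d = Fintype.card (Fin d → Fin 3) := by simp
  rw [h3, ← Finset.card_univ]
  apply Finset.card_le_card_of_injOn (fun bc => enc a bc.1 bc.2) (fun _ _ => Finset.mem_univ _)
  rintro ⟨b, c⟩ hbc ⟨b', c'⟩ hbc' heq
  simp only [Finset.coe_filter, Set.mem_setOf_eq, Finset.mem_univ, true_and] at hbc hbc'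
  have key : ∀ i : Fin d, (i ∈ b ↔ i ∈ b') ∧ (i ∈ c ↔ i ∈ c') := by
    intro i
    have hi := congrFun heq i
    by_cases hia : i ∈ a
    · have w1 : i ∈ b ∨ i ∈ c := by simpa using hbc.1 hia
      have w2 : i ∈ b' ∨ i ∈ c' := by simpa using hbc'.1 hia
      by_cases hib : i ∈ b <;> by_cases hic : i ∈ c <;>
        by_cases hib' : i ∈ b' <;> by_cases hic' : i ∈ c' <;>
        simp_all [enc] <;> tauto
    · have w1 : i ∈ b ↔ i ∈ c := by
        constructor
        · intro h; have := hbc.2.1 h; simp [hia] at this; exact this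
        · intro h; have := hbc.2.2 h; simp [hia] at this; exact this
      have w2 : i ∈ b' ↔ i ∈ c' := by
        constructor
        · intro h; have := hbc'.2.1 h; simp [hia] at this; exact this
        · intro h; have := hbc'.2.2 h; simp [hia] at this; exact this
      by_cases hib : i ∈ b <;> by_cases hib' : i ∈ b' <;>
        simp_all [enc] <;> tauto
  have hb : b = b' := Set.ext fun i => (key i).1
  have hc : c = c' := Set.ext fun i => (key i).2
  simp [hb, hc]

open Classical in
lemma Nk_le {d : ℕ} (β γ : Set (Set (Fin d))) (a : Set (Fin d)) (k : ℕ) :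
    Nk β γ a k ≤ 3 ^ d := by
  classical
  refine le_trans (Finset.card_le_card ?_) (tri_card_le a)
  intro bc
  simp only [Nk, Finset.mem_filter]
  tauto

lemma key3 {d : ℕ} (m s : ℕ) (hm : 3 ^ d + 4 ≤ m) (N N' : ℕ → ℕ)
    (hb : ∀ k, N k ≤ 3 ^ d) (hb' : ∀ k, N' k ≤ 3 ^ d)
    (hs : ∀ k, N k ≠ 0 → 2 * k ≤ s) (hs' : ∀ k, N' k ≠ 0 → 2 * k ≤ s)
    (hd : ∀ k, N k ≠ 0 → k < d + 1) (hd' : ∀ k, N' k ≠ 0 → k < d + 1)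
    (hsum : ∑ k ∈ range (d + 1), N k * ((m - 1) ^ k * (m - 2) ^ (s - 2 * k))
      = ∑ k ∈ range (d + 1), N' k * ((m - 1) ^ k * (m - 2) ^ (s - 2 * k))) :
    ∀ k, N k = N' k := by
  have hm4 : 4 ≤ m := by have : 1 ≤ 3 ^ d := Nat.one_le_pow _ _ (by omega); omega
  set v : ℕ → ℕ := fun k => (m - 1) ^ k * (m - 2) ^ (s - 2 * k) with hv
  set D : ℕ → ℤ := fun k => (N k : ℤ) - N' k with hD
  obtain ⟨n, hn⟩ : ∃ n, n = min (d + 1) (s / 2 + 1) := ⟨_, rfl⟩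
  have hzero : ∀ k, n ≤ k → D k = 0 := by
    intro k hk
    have h1 : N k = 0 := by
      by_contra h
      have a1 := hs k h
      have a2 := hd k h
      omega
    have h2 : N' k = 0 := by
      by_contra h
      have a1 := hs' k h
      have a2 := hd' k h
      omega
    simp [hD, h1, h2]
  have hsum2 : ∑ k ∈ range n, D k * v k = 0 := by
    have e1 : ∑ k ∈ range (d + 1), D k * v k = 0 := by
      have e2 : ∑ k ∈ range (d + 1), D k * v k
          = ((∑ k ∈ range (d + 1), N k * ((m - 1) ^ k * (m - 2) ^ (s - 2 * k)) : ℕ) : ℤ)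
            - ((∑ k ∈ range (d + 1), N' k * ((m - 1) ^ k * (m - 2) ^ (s - 2 * k)) : ℕ) : ℤ) := by
        push_cast
        rw [← Finset.sum_sub_distrib]
        apply Finset.sum_congr rfl
        intro k _
        simp only [hD, hv]
        push_cast
        ring
      rw [e2, hsum]
      ring
    rw [← e1]
    apply Finset.sum_subset
    · apply Finset.range_subset_range.mpr; omega
    · intro k _ hk
      rw [hzero k (by simp at hk ⊢; omega)]
      ring
  have hdig := digit (3 ^ d) n v D
    (fun t _ => Nat.mul_pos (pow_pos (by omega) _) (pow_pos (by omega) _))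
    ?hchain
    (fun t _ => by
      have h1 := hb t
      have h2 := hb' t
      have e : D t = (N t : ℤ) - N' t := rfl
      rw [e, abs_sub_le_iff]
      constructor <;> omega)
    hsum2
  case hchain =>
    intro t ht
    have h2t : 2 * (t + 1) ≤ s := by omega
    have hes : s - 2 * t = (s - 2 * (t + 1)) + 2 := by omega
    rw [hv]
    simp only []
    rw [hes, pow_succ, pow_succ]
    have hkey : (3 ^ d + 1) * (m - 1) < (m - 2) * (m - 2) := by
      obtain ⟨q, rfl⟩ : ∃ q, m = q + 4 := ⟨m - 4, by omega⟩
      have hq : 3 ^ d ≤ q := by omega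
      have e1 : q + 4 - 1 = q + 3 := by omega
      have e2 : q + 4 - 2 = q + 2 := by omega
      rw [e1, e2]
      nlinarith
    calc (3 ^ d + 1) * ((m - 1) ^ (t + 1) * (m - 2) ^ (s - 2 * (t + 1)))
        = ((3 ^ d + 1) * (m - 1)) * ((m - 1) ^ t * (m - 2) ^ (s - 2 * (t + 1))) := by
          rw [pow_succ]; ring
      _ < ((m - 2) * (m - 2)) * ((m - 1) ^ t * (m - 2) ^ (s - 2 * (t + 1))) :=
          Nat.mul_lt_mul_of_pos_right hkey
            (Nat.mul_pos (pow_pos (by omega) _) (pow_pos (by omega) _))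
      _ = (m - 1) ^ t * (m - 2) ^ (s - 2 * (t + 1)) * (m - 2) * (m - 2) := by ring
      _ = (m - 1) ^ t * ((m - 2) ^ (s - 2 * (t + 1) + 1) * (m - 2)) := by rw [pow_succ]; ring
  intro k
  rcases lt_or_ge k n with h | h
  · have h2 : (N k : ℤ) - (N' k : ℤ) = 0 := hdig k h
    omega
  · have h2 : (N k : ℤ) - (N' k : ℤ) = 0 := hzero k h
    omega


lemma E4 {d : ℕ} (a b c : Set (Fin d)) :
    (b ∩ c).ncard = ((b ∩ c) \ a).ncard + (a ∩ b ∩ c).ncard := by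
  have h := Set.ncard_inter_add_ncard_diff_eq_ncard (b ∩ c) a (Set.toFinite _)
  have e : b ∩ c ∩ a = a ∩ b ∩ c := by ext i; simp; tauto
  rw [e] at h
  omega

lemma type_eq_iff {d : ℕ} {a b c t₁ t₂ t₃ : Set (Fin d)} (ht : IsTriangle t₁ t₂ t₃)
    (hA : a.ncard = t₁.ncard) (hB : b.ncard = t₂.ncard) (hC : c.ncard = t₃.ncard) :
    tripleType a b c = tripleType t₁ t₂ t₃ ↔
      (IsTriangle a b c ∧ ((b ∩ c) \ a).ncard = ((t₂ ∩ t₃) \ t₁).ncard) := by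
  have T := tri_stats ht
  have e4 := E4 a b c
  have e4t := E4 t₁ t₂ t₃
  constructor
  · intro h
    simp only [tripleType, Prod.mk.injEq] at h
    obtain ⟨h1, h2, h3, h4, h5, h6, h7⟩ := h
    have tr1 := (subset_iff_ncard t₁ t₂ t₃).mp ht.1
    have tr2 := (subset_iff_ncard t₂ t₁ t₃).mp ht.2.1
    have tr3 := (subset_iff_ncard t₃ t₁ t₂).mp ht.2.2
    have c21 : (t₂ ∩ t₁).ncard = (t₁ ∩ t₂).ncard := by rw [Set.inter_comm]
    have c213 : (t₂ ∩ t₁ ∩ t₃).ncard = (t₁ ∩ t₂ ∩ t₃).ncard := by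
      congr 1; ext i; simp; tauto
    have c31 : (t₃ ∩ t₁).ncard = (t₁ ∩ t₃).ncard := by rw [Set.inter_comm]
    have c32 : (t₃ ∩ t₂).ncard = (t₂ ∩ t₃).ncard := by rw [Set.inter_comm]
    have c312 : (t₃ ∩ t₁ ∩ t₂).ncard = (t₁ ∩ t₂ ∩ t₃).ncard := by
      congr 1; ext i; simp; tauto
    have b21 : (b ∩ a).ncard = (a ∩ b).ncard := by rw [Set.inter_comm]
    have b213 : (b ∩ a ∩ c).ncard = (a ∩ b ∩ c).ncard := by
      congr 1; ext i; simp; tauto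
    have b31 : (c ∩ a).ncard = (a ∩ c).ncard := by rw [Set.inter_comm]
    have b32 : (c ∩ b).ncard = (b ∩ c).ncard := by rw [Set.inter_comm]
    have b312 : (c ∩ a ∩ b).ncard = (a ∩ b ∩ c).ncard := by
      congr 1; ext i; simp; tauto
    refine ⟨⟨?_, ?_, ?_⟩, by omega⟩
    · exact (subset_iff_ncard a b c).mpr (by omega)
    · exact (subset_iff_ncard b a c).mpr (by omega)
    · exact (subset_iff_ncard c a b).mpr (by omega)
  · rintro ⟨htr, hk⟩
    have T2 := tri_stats htr
    simp only [tripleType, Prod.mk.injEq]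
    refine ⟨hA, hB, hC, by omega, by omega, by omega, by omega⟩


theorem stmt5 (m d : ℕ) (hd : 1 ≤ d) (hm : 3 ^ d + 4 ≤ m)
    (X : Set (Set ((Fin d → Fin m) × (Fin d → Fin m))))
    (hX : IsAssocScheme X)
    (h1 : Refines (tensorTrivial m d) X) (h2 : Refines X (hammingScheme m d)) :
    ∃ S : Set (Set (Set (Fin d))), IsSAS S ∧ X = mPow m d S := by
  classical
  obtain ⟨hpart, hdiag, hsymm, hcoh⟩ := hX
  have hm2 : 2 ≤ m := by have : 1 ≤ 3 ^ d := Nat.one_le_pow _ _ (by omega); omega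
  have hF : ∀ a : Set (Fin d),
      ∃ R ∈ X, {p : (Fin d → Fin m) × (Fin d → Fin m) | diffSet p = a} ⊆ R := by
    intro a
    apply h1
    obtain ⟨p, hp⟩ := tcell_nonempty m hm2 a
    exact ⟨⟨p, hp⟩, a, rfl⟩
  choose F hFX hFsub using hF
  have hFmem : ∀ p : (Fin d → Fin m) × (Fin d → Fin m), p ∈ F (diffSet p) :=
    fun p => hFsub (diffSet p) rfl
  have huniq : ∀ (p : (Fin d → Fin m) × (Fin d → Fin m)) (R), R ∈ X → p ∈ R →
      R = F (diffSet p) := by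
    intro p R hR hpR
    obtain ⟨R₀, ⟨hR₀X, hpR₀⟩, hun⟩ := hpart.2 p
    rw [hun R ⟨hR, hpR⟩]
    exact (hun (F (diffSet p)) ⟨hFX _, hFmem p⟩).symm
  have hRel : ∀ R ∈ X, relOf m d {x | F x = R} = R := by
    intro R hR
    ext p
    simp only [relOf, Set.mem_setOf_eq]
    constructor
    · intro h; rw [← h]; exact hFmem p
    · intro h; exact (huniq p R hR h).symm
  have hcards : ∀ R ∈ X, ∀ x x' : Set (Fin d), F x = R → F x' = R → x.ncard = x'.ncard := by
    intro R hR x x' hx hx'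
    obtain ⟨R', hR', hsub⟩ := h2 R hR
    obtain ⟨hne', t, rfl⟩ := hR'
    have key : ∀ y : Set (Fin d), F y = R → y.ncard = t := by
      intro y hy
      obtain ⟨p, hp⟩ := tcell_nonempty m hm2 y
      have hpR : p ∈ R := by
        rw [← hy, ← hp]
        exact hFmem p
      have h5 : (diffSet p).ncard = t := hsub hpR
      rw [hp] at h5
      exact h5
    rw [key x hx, key x' hx']
  refine ⟨{α | ∃ R ∈ X, α = {x | F x = R}}, ⟨⟨?_, ?_⟩, ?_, ?_⟩, ?_⟩
  · -- ∅ not in S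
    rintro ⟨R, hR, heq⟩
    obtain ⟨p, hp⟩ := Set.nonempty_iff_ne_empty.mpr (fun h => hpart.1 (h ▸ hR))
    have : diffSet p ∈ (∅ : Set (Set (Fin d))) := by
      rw [heq]
      exact (huniq p R hR hp).symm
    exact this
  · -- partition
    intro a
    refine ⟨{x | F x = F a}, ⟨⟨F a, hFX a, rfl⟩, rfl⟩, ?_⟩
    rintro β ⟨⟨R, hR, rfl⟩, hmem⟩
    have : F a = R := hmem
    rw [← this]
  · -- cardinality condition
    rintro α ⟨R, hR, rfl⟩ a ha a' ha'
    exact hcards R hR a a' ha ha'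
  · -- main triangle condition
    rintro α ⟨Rα, hRα, rfl⟩ β ⟨Rβ, hRβ, rfl⟩ γ ⟨Rγ, hRγ, rfl⟩ a ha a' ha' t₁ t₂ t₃ htri
    set βs : Set (Set (Fin d)) := {x | F x = Rβ} with hβs
    set γs : Set (Set (Fin d)) := {x | F x = Rγ} with hγs
    -- cardinalities on cells
    obtain ⟨pβ, hpβ⟩ := Set.nonempty_iff_ne_empty.mpr (fun h => hpart.1 (h ▸ hRβ))
    obtain ⟨pγ, hpγ⟩ := Set.nonempty_iff_ne_empty.mpr (fun h => hpart.1 (h ▸ hRγ))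
    set Bc : ℕ := (diffSet pβ).ncard with hBc
    set Cc : ℕ := (diffSet pγ).ncard with hCc
    have hβcard : ∀ b ∈ βs, b.ncard = Bc :=
      fun b hb => hcards Rβ hRβ b (diffSet pβ) hb (huniq pβ Rβ hRβ hpβ).symm
    have hγcard : ∀ c ∈ γs, c.ncard = Cc :=
      fun c hc => hcards Rγ hRγ c (diffSet pγ) hc (huniq pγ Rγ hRγ hpγ).symm
    have hA' : a'.ncard = a.ncard := hcards Rα hRα a' a ha' ha
    -- the count identity
    obtain ⟨q, hq⟩ := hcoh Rα hRα Rβ hRβ Rγ hRγ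
    have hcount : ∀ a₀ : Set (Fin d), a₀ ∈ {x | F x = Rα} →
        ∑ k ∈ range (d + 1),
          Nk βs γs a₀ k * ((m - 1) ^ k * (m - 2) ^ (Bc + Cc - a₀.ncard - 2 * k)) = q := by
      intro a₀ ha₀
      obtain ⟨p, hp⟩ := tcell_nonempty m hm2 a₀
      have hpRα : p ∈ Rα := by
        have h := hFmem p
        rw [hp] at h
        rwa [show F a₀ = Rα from ha₀] at h
      have hqp := hq p hpRα
      have e1 : {w | (p.1, w) ∈ Rβ ∧ (w, p.2) ∈ Rγ}
          = {w : Fin d → Fin m | diffSet (p.1, w) ∈ βs ∧ diffSet (w, p.2) ∈ γs} := by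
        rw [← hRel Rβ hRβ, ← hRel Rγ hRγ]
        rfl
      rw [e1] at hqp
      rw [S1 m p.1 p.2 βs γs] at hqp
      have hp2 : diffSet (p.1, p.2) = a₀ := hp
      rw [hp2] at hqp
      rw [S2 m a₀ βs γs Bc Cc hβcard hγcard] at hqp
      exact hqp
    have hNk : ∀ k, Nk βs γs a k = Nk βs γs a' k := by
      have hsupp : ∀ a₀ : Set (Fin d), a₀.ncard = a.ncard → ∀ k, Nk βs γs a₀ k ≠ 0 →
          2 * k ≤ Bc + Cc - a.ncard ∧ k < d + 1 := by
        intro a₀ ha₀ k hk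
        obtain ⟨bc, hbc⟩ := Finset.card_ne_zero.mp hk
        simp only [Nk, Finset.mem_filter, Finset.mem_univ, true_and] at hbc
        obtain ⟨m1, m2, htr, hkk⟩ := hbc
        have T := (tri_stats htr).2.2.2
        rw [hβcard _ m1, hγcard _ m2, hkk, ha₀] at T
        constructor
        · omega
        · have hle : (((bc.1 ∩ bc.2) \ a₀)).ncard ≤ (Set.univ : Set (Fin d)).ncard :=
            Set.ncard_le_ncard (Set.subset_univ _) (Set.toFinite _)
          rw [hkk, Set.ncard_univ] at hle
          simpa using Nat.lt_succ_of_le hle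
      have hsum : ∑ k ∈ range (d + 1),
            Nk βs γs a k * ((m - 1) ^ k * (m - 2) ^ (Bc + Cc - a.ncard - 2 * k))
          = ∑ k ∈ range (d + 1),
            Nk βs γs a' k * ((m - 1) ^ k * (m - 2) ^ (Bc + Cc - a.ncard - 2 * k)) := by
        have e2 := hcount a ha
        have e3 := hcount a' ha'
        rw [hA'] at e3
        rw [e2, e3]
      exact key3 m (Bc + Cc - a.ncard) hm _ _ (fun k => Nk_le βs γs a k)
        (fun k => Nk_le βs γs a' k)
        (fun k hk => ((hsupp a rfl k hk).1))
        (fun k hk => ((hsupp a' hA' k hk).1))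
        (fun k hk => ((hsupp a rfl k hk).2))
        (fun k hk => ((hsupp a' hA' k hk).2))
        hsum
    -- convert to typeCount
    by_cases hmatch : a.ncard = t₁.ncard ∧ Bc = t₂.ncard ∧ Cc = t₃.ncard
    · have hclaim : ∀ a₀ : Set (Fin d), a₀.ncard = a.ncard →
          typeCount βs γs a₀ (tripleType t₁ t₂ t₃) = Nk βs γs a₀ ((t₂ ∩ t₃) \ t₁).ncard := by
        intro a₀ ha₀
        rw [typeCount, Nk]
        have hsets : {p : Set (Fin d) × Set (Fin d) |
              p.1 ∈ βs ∧ p.2 ∈ γs ∧ tripleType a₀ p.1 p.2 = tripleType t₁ t₂ t₃}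
            = ↑(univ.filter (fun bc : Set (Fin d) × Set (Fin d) =>
              bc.1 ∈ βs ∧ bc.2 ∈ γs ∧ IsTriangle a₀ bc.1 bc.2 ∧
                ((bc.1 ∩ bc.2) \ a₀).ncard = ((t₂ ∩ t₃) \ t₁).ncard)) := by
          ext bc
          simp only [Set.mem_setOf_eq, Finset.coe_filter, Finset.mem_univ, true_and]
          constructor
          · rintro ⟨m1, m2, hT⟩
            have hiff := (type_eq_iff htri (by omega)
              (by rw [hβcard _ m1]; exact hmatch.2.1)
              (by rw [hγcard _ m2]; exact hmatch.2.2)).mp hT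
            exact ⟨m1, m2, hiff.1, hiff.2⟩
          · rintro ⟨m1, m2, htr, hk⟩
            exact ⟨m1, m2, (type_eq_iff htri (by omega)
              (by rw [hβcard _ m1]; exact hmatch.2.1)
              (by rw [hγcard _ m2]; exact hmatch.2.2)).mpr ⟨htr, hk⟩⟩
        rw [hsets, Set.ncard_coe_finset]
        convert rfl
      rw [hclaim a rfl, hclaim a' hA', hNk]
    · have hzero : ∀ a₀ : Set (Fin d), a₀.ncard = a.ncard →
          typeCount βs γs a₀ (tripleType t₁ t₂ t₃) = 0 := by
        intro a₀ ha₀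
        rw [typeCount, Set.ncard_eq_zero (Set.toFinite _)]
        rw [Set.eq_empty_iff_forall_notMem]
        rintro bc ⟨m1, m2, hT⟩
        simp only [tripleType, Prod.mk.injEq] at hT
        obtain ⟨c1, c2, c3, -⟩ := hT
        apply hmatch
        refine ⟨by omega, ?_, ?_⟩
        · rw [← hβcard _ m1]; exact c2
        · rw [← hγcard _ m2]; exact c3
      rw [hzero a rfl, hzero a' hA']
  · -- X = mPow
    ext R
    simp only [mPow, Set.mem_setOf_eq]
    constructor
    · intro hR
      exact ⟨Set.nonempty_iff_ne_empty.mpr (fun h => hpart.1 (h ▸ hR)),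
        {x | F x = R}, ⟨R, hR, rfl⟩, (hRel R hR).symm⟩
    · rintro ⟨hne, α, ⟨R', hR', rfl⟩, rfl⟩
      rw [hRel R' hR']
      exact hR'

end Paper
end

section
/- Let 𝔖 be a set association scheme on Ω = [d] with d ≥ 2, and let m ≥ 2. Then the association scheme [m]^𝔖 is primitive if and only if 𝔖 is homogeneous and m ≥ 3. -/
namespace Paper


private lemma exists_third {m : ℕ} (hm : 3 ≤ m) (a b : Fin m) :
    ∃ z : Fin m, z ≠ a ∧ z ≠ b := by
  by_contra h
  push_neg at h
  have hsub : (Finset.univ : Finset (Fin m)) ⊆ {a, b} := by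
    intro z _
    by_cases hz : z = a
    · simp [hz]
    · simp [h z hz]
  have hcard := Finset.card_le_card hsub
  have h2 : ({a, b} : Finset (Fin m)).card ≤ 2 := by
    refine le_trans (Finset.card_insert_le _ _) ?_
    simp
  simp [Finset.card_univ] at hcard
  omega

private lemma fin2_eq : ∀ a b c : Fin 2, b ≠ a → b ≠ c → a = c := by decide

private lemma reach_of_adj_closed {V : Type*} (G : SimpleGraph V) (P : V → Prop)
    (h : ∀ x y, G.Adj x y → P x → P y) :
    ∀ {u w : V}, G.Reachable u w → P u → P w := by
  intro u w hr
  obtain ⟨p⟩ := hr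
  induction p with
  | nil => exact id
  | cons hadj _ ih => exact fun hu => ih (h _ _ hadj hu)

private lemma relOf_eq_diag {m d : ℕ} {S : Set (Set (Set (Fin d)))} (hS : IsSAS S)
    {α : Set (Set (Fin d))} (hα : α ∈ S) (hαe : (∅ : Set (Fin d)) ∈ α) :
    relOf m d α = diag (Fin d → Fin m) := by
  ext q
  simp only [relOf, diag, Set.mem_setOf_eq]
  constructor
  · intro hq
    have h0 : (diffSet q).ncard = 0 := by
      have := hS.2.1 α hα _ hq ∅ hαe
      simpa using this
    have hqe : diffSet q = ∅ := (Set.ncard_eq_zero (Set.toFinite _)).1 h0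
    funext k
    by_contra hk
    exact (Set.eq_empty_iff_forall_notMem.1 hqe k) hk
  · intro hq
    have hqe : diffSet q = ∅ := by
      ext k; simp [diffSet, hq]
    rw [hqe]; exact hαe

private lemma support_lemma {d : ℕ} {S : Set (Set (Set (Fin d)))} (hS : IsSAS S)
    (hhom : SetHomog S) {α : Set (Set (Fin d))} (hα : α ∈ S) {a : Set (Fin d)}
    (ha : a ∈ α) {j : Fin d} (hja : j ∈ a) (i : Fin d) : ∃ c ∈ α, i ∈ c := by
  have hσS : {s : Set (Fin d) | ∃ v, s = {v}} ∈ S := hhom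
  have hjσ : ({j} : Set (Fin d)) ∈ {s : Set (Fin d) | ∃ v, s = {v}} := ⟨j, rfl⟩
  have hiσ : ({i} : Set (Fin d)) ∈ {s : Set (Fin d) | ∃ v, s = {v}} := ⟨i, rfl⟩
  have htri : IsTriangle ({j} : Set (Fin d)) a a :=
    ⟨by simp [Set.singleton_subset_iff, hja], Set.subset_union_right,
      Set.subset_union_right⟩
  have hcount := hS.2.2 _ hσS α hα α hα ({j} : Set (Fin d)) hjσ ({i} : Set (Fin d)) hiσ
    ({j} : Set (Fin d)) a a htri
  have hne : 0 < typeCount α α ({j} : Set (Fin d)) (tripleType ({j} : Set (Fin d)) a a) := by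
    rw [typeCount]
    exact (Set.ncard_pos (Set.toFinite _)).2 ⟨(a, a), ha, ha, rfl⟩
  rw [hcount, typeCount] at hne
  obtain ⟨⟨b, c⟩, hb, hc, htt⟩ := (Set.ncard_pos (Set.toFinite _)).1 hne
  refine ⟨b, hb, ?_⟩
  simp only [tripleType, Prod.mk.injEq] at htt
  have h4 : (({i} : Set (Fin d)) ∩ b).ncard = (({j} : Set (Fin d)) ∩ a).ncard :=
    htt.2.2.2.1
  have hja' : ({j} : Set (Fin d)) ∩ a = {j} :=
    Set.inter_eq_self_of_subset_left (Set.singleton_subset_iff.2 hja)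
  rw [hja', Set.ncard_singleton] at h4
  obtain ⟨x, hx⟩ := Set.nonempty_of_ncard_ne_zero
    (show (({i} : Set (Fin d)) ∩ b).ncard ≠ 0 by omega)
  obtain ⟨hx1, hxb⟩ := hx
  rw [Set.mem_singleton_iff] at hx1
  subst hx1
  exact hxb

private lemma step_reach {m d : ℕ} (hm : 3 ≤ m) {α : Set (Set (Fin d))}
    {c : Set (Fin d)} (hc : c ∈ α) {i : Fin d} (hic : i ∈ c)
    (u : Fin d → Fin m) (x : Fin m) :
    (cellGraph (relOf m d α)).Reachable u (Function.update u i x) := by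
  classical
  set w := Function.update u i x with hw
  choose z hz1 hz2 using fun k => exists_third hm (u k) (w k)
  set v : Fin d → Fin m := fun k => if k ∈ c then z k else u k with hv
  have hvi : v i = z i := by simp [hv, hic]
  have hd1 : diffSet (u, v) = c := by
    ext k
    by_cases hk : k ∈ c
    · simp only [diffSet, Set.mem_setOf_eq, hv, if_pos hk]
      exact iff_of_true (fun h => hz1 k h.symm) hk
    · simp only [diffSet, Set.mem_setOf_eq, hv, if_neg hk]
      exact iff_of_false (fun h => h rfl) hk
  have hd2 : diffSet (v, w) = c := by
    ext k
    by_cases hk : k ∈ c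
    · simp only [diffSet, Set.mem_setOf_eq, hv, if_pos hk]
      exact iff_of_true (hz2 k) hk
    · have hki : k ≠ i := fun h => hk (h ▸ hic)
      simp only [diffSet, Set.mem_setOf_eq, hv, if_neg hk, hw, Function.update_of_ne hki]
      exact iff_of_false (fun h => h rfl) hk
  have hadj1 : (cellGraph (relOf m d α)).Adj u v := by
    rw [cellGraph, SimpleGraph.fromRel_adj]
    refine ⟨?_, Or.inl ?_⟩
    · intro h
      exact hz1 i (by rw [← hvi, ← h])
    · show diffSet (u, v) ∈ α
      rw [hd1]; exact hc
  have hadj2 : (cellGraph (relOf m d α)).Adj v w := by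
    rw [cellGraph, SimpleGraph.fromRel_adj]
    refine ⟨?_, Or.inl ?_⟩
    · intro h
      exact hz2 i (by rw [← hvi, h])
    · show diffSet (v, w) ∈ α
      rw [hd2]; exact hc
  exact hadj1.reachable.trans hadj2.reachable

private lemma reach_all {m d : ℕ} (hm : 3 ≤ m) {α : Set (Set (Fin d))}
    (hsupp : ∀ i : Fin d, ∃ c ∈ α, i ∈ c) (u w : Fin d → Fin m) :
    (cellGraph (relOf m d α)).Reachable u w := by
  classical
  suffices h : ∀ s : Finset (Fin d), ∀ u w : Fin d → Fin m,
      (∀ k, k ∉ s → u k = w k) → (cellGraph (relOf m d α)).Reachable u w by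
    exact h Finset.univ u w (fun k hk => absurd (Finset.mem_univ k) hk)
  intro s
  induction s using Finset.induction_on with
  | empty =>
    intro u w h
    have huw : u = w := funext fun k => h k (Finset.notMem_empty k)
    subst huw
    exact SimpleGraph.Reachable.refl u
  | @insert i s hi ih =>
    intro u w h
    obtain ⟨c, hc, hic⟩ := hsupp i
    refine (step_reach hm hc hic u (w i)).trans (ih _ _ ?_)
    intro k hk
    by_cases hki : k = i
    · subst hki; simp
    · rw [Function.update_of_ne hki]
      exact h k (by simp [Finset.mem_insert, hki, hk])

theorem stmt6 (m d : ℕ) (hd : 2 ≤ d) (hm : 2 ≤ m)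
    (S : Set (Set (Set (Fin d)))) (hS : IsSAS S) :
    IsPrimitiveScheme (mPow m d S) ↔ (SetHomog S ∧ 3 ≤ m) := by
  classical
  constructor
  · intro hprim
    constructor
    · -- homogeneity
      have hi0 : (0 : ℕ) < d := by omega
      obtain ⟨σ, ⟨hσS, hs0⟩, -⟩ := hS.1.2 ({(⟨0, hi0⟩ : Fin d)} : Set (Fin d))
      have hcard1 : ∀ c ∈ σ, c.ncard = 1 := by
        intro c hc
        simpa using hS.2.1 σ hσS c hc _ hs0
      have hsing : ∀ c ∈ σ, ∃ v, c = {v} := fun c hc => Set.ncard_eq_one.1 (hcard1 c hc)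
      have h0m : (0 : ℕ) < m := by omega
      have h1m : (1 : ℕ) < m := by omega
      have h01 : (⟨0, h0m⟩ : Fin m) ≠ ⟨1, h1m⟩ := by
        intro h
        simpa using congrArg Fin.val h
      set u0 : Fin d → Fin m := fun _ => ⟨0, h0m⟩ with hu0
      have hdiff : ∀ j : Fin d,
          diffSet (u0, Function.update u0 j ⟨1, h1m⟩) = {j} := by
        intro j
        ext k
        simp only [diffSet, Set.mem_setOf_eq, Set.mem_singleton_iff]
        by_cases hk : k = j
        · subst hk
          rw [Function.update_self]
          exact iff_of_true h01 rfl
        · rw [Function.update_of_ne hk]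
          exact iff_of_false (fun h => h rfl) hk
      have hRmem : relOf m d σ ∈ mPow m d S := by
        refine ⟨⟨(u0, Function.update u0 ⟨0, hi0⟩ ⟨1, h1m⟩), ?_⟩, σ, hσS, rfl⟩
        show diffSet _ ∈ σ
        rw [hdiff]; exact hs0
      have hRne : relOf m d σ ≠ diag (Fin d → Fin m) := by
        intro h
        have hmem : (u0, Function.update u0 ⟨0, hi0⟩ ⟨1, h1m⟩) ∈ relOf m d σ := by
          show diffSet _ ∈ σ
          rw [hdiff]; exact hs0
        rw [h] at hmem
        have heq : u0 = Function.update u0 ⟨0, hi0⟩ ⟨1, h1m⟩ := hmem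
        have := congrFun heq ⟨0, hi0⟩
        rw [Function.update_self] at this
        exact h01 this
      have hconn := hprim _ hRmem hRne
      have hjall : ∀ j : Fin d, ({j} : Set (Fin d)) ∈ σ := by
        intro j
        by_contra hj
        have hcoord : ∀ x y : Fin d → Fin m, (x, y) ∈ relOf m d σ → x j = y j := by
          intro x y hxy
          have hxy' : diffSet (x, y) ∈ σ := hxy
          by_contra hne2
          obtain ⟨v, hv⟩ := hsing _ hxy'
          have hjv : j ∈ diffSet (x, y) := hne2
          rw [hv, Set.mem_singleton_iff] at hjv
          subst hjv
          rw [hv] at hxy'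
          exact hj hxy'
        have hclosed : ∀ x y : Fin d → Fin m,
            (cellGraph (relOf m d σ)).Adj x y → x j = u0 j → y j = u0 j := by
          intro x y hxy hx
          rw [cellGraph, SimpleGraph.fromRel_adj] at hxy
          obtain ⟨-, hxy | hxy⟩ := hxy
          · rw [← hcoord x y hxy]; exact hx
          · rw [hcoord y x hxy]; exact hx
        have hreach := hconn.preconnected u0 (Function.update u0 j ⟨1, h1m⟩)
        have hP := reach_of_adj_closed _ _ hclosed hreach rfl
        rw [Function.update_self] at hP
        exact h01 hP.symm
      show {a : Set (Fin d) | ∃ v, a = {v}} ∈ S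
      have hσeq : {a : Set (Fin d) | ∃ v, a = {v}} = σ := by
        ext c
        constructor
        · rintro ⟨v, rfl⟩; exact hjall v
        · intro hc; exact hsing c hc
      rw [hσeq]; exact hσS
    · -- 3 ≤ m
      by_contra hm3
      have hm2 : m = 2 := by omega
      subst hm2
      obtain ⟨α, ⟨hαS, hu⟩, -⟩ := hS.1.2 (Set.univ : Set (Fin d))
      have hαuniv : ∀ c ∈ α, c = Set.univ := by
        intro c hc
        by_contra hcne
        have hss : c ⊂ Set.univ := Set.ssubset_univ_iff.2 hcne
        have hlt := Set.ncard_lt_ncard hss (Set.toFinite _)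
        have heq := hS.2.1 α hαS c hc Set.univ hu
        omega
      set u0 : Fin d → Fin 2 := fun _ => 0 with hu0
      set v0 : Fin d → Fin 2 := fun _ => 1 with hv0
      have hmemR : (u0, v0) ∈ relOf 2 d α := by
        show diffSet (u0, v0) ∈ α
        have hduniv : diffSet (u0, v0) = Set.univ := by
          ext k
          simp [diffSet, hu0, hv0]
        rw [hduniv]; exact hu
      have hRmem : relOf 2 d α ∈ mPow 2 d S := ⟨⟨(u0, v0), hmemR⟩, α, hαS, rfl⟩
      have hi0d : (0 : ℕ) < d := by omega
      have hi1d : (1 : ℕ) < d := by omega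
      have hRne : relOf 2 d α ≠ diag (Fin d → Fin 2) := by
        intro h
        rw [h] at hmemR
        have heq : u0 = v0 := hmemR
        have := congrFun heq ⟨0, hi0d⟩
        simp [hu0, hv0] at this
      have hconn := hprim _ hRmem hRne
      have hfull : ∀ x y : Fin d → Fin 2, (x, y) ∈ relOf 2 d α → ∀ k, x k ≠ y k := by
        intro x y hxy k
        have hxy' : diffSet (x, y) ∈ α := hxy
        have hk : k ∈ diffSet (x, y) := (hαuniv _ hxy') ▸ Set.mem_univ k
        exact hk
      have hclosed : ∀ x y : Fin d → Fin 2,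
          (cellGraph (relOf 2 d α)).Adj x y →
          (x = u0 ∨ ∀ k, x k ≠ u0 k) → (y = u0 ∨ ∀ k, y k ≠ u0 k) := by
        intro x y hxy hx
        rw [cellGraph, SimpleGraph.fromRel_adj] at hxy
        obtain ⟨-, hxy | hxy⟩ := hxy
        · have hk := hfull _ _ hxy
          rcases hx with rfl | hx
          · exact Or.inr fun k => (hk k).symm
          · refine Or.inl (funext fun k => ?_)
            exact fin2_eq _ _ _ (hk k) (hx k)
        · have hk := hfull _ _ hxy
          rcases hx with rfl | hx
          · exact Or.inr fun k => hk k
          · refine Or.inl (funext fun k => ?_)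
            exact fin2_eq _ _ _ (hk k).symm (hx k)
      have hi01 : (⟨0, hi0d⟩ : Fin d) ≠ ⟨1, hi1d⟩ := by
        intro h
        simpa using congrArg Fin.val h
      set w : Fin d → Fin 2 := Function.update u0 ⟨0, hi0d⟩ 1 with hwdef
      have hreach := hconn.preconnected u0 w
      have hP := reach_of_adj_closed _ _ hclosed hreach (Or.inl rfl)
      rcases hP with h | h
      · have := congrFun h ⟨0, hi0d⟩
        rw [hwdef, Function.update_self] at this
        simp [hu0] at this
      · have := h ⟨1, hi1d⟩
        rw [hwdef, Function.update_of_ne hi01.symm] at this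
        exact this rfl
  · rintro ⟨hhom, hm3⟩ R hR hRd
    obtain ⟨hRne, α, hαS, rfl⟩ := hR
    obtain ⟨p, hp⟩ := hRne
    have hp' : diffSet p ∈ α := hp
    have hane : (diffSet p).Nonempty := by
      rcases Set.eq_empty_or_nonempty (diffSet p) with h | h
      · exact absurd (relOf_eq_diag hS hαS (h ▸ hp')) hRd
      · exact h
    obtain ⟨j, hj⟩ := hane
    have hsupp : ∀ i : Fin d, ∃ c ∈ α, i ∈ c :=
      fun i => support_lemma hS hhom hαS hp' hj i
    have hne : Nonempty (Fin d → Fin m) := ⟨fun _ => ⟨0, by omega⟩⟩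
    exact SimpleGraph.Connected.mk (fun u w => reach_all hm3 hsupp u w)

end Paper
end

section
/- Let 𝔖 be a set association scheme on Ω = [d] with d ≥ 2, and let m ≥ 2. Then Aut([m]^𝔖) = Sym(m) ≀ Aut(𝔖); that is, a permutation g of [m]^d preserves every cell of [m]^𝔖 if and only if there exist π ∈ Aut(𝔖) and permutations σ_1, …, σ_d of [m] such that g(u) = (σ_i(u_{π^{-1}(i)}))_{i ∈ [d]} for all u ∈ [m]^d. -/
namespace Paper


private lemma ncard_diffSet {m d : ℕ} (u v : Fin d → Fin m) :
    (diffSet ((u, v) : (Fin d → Fin m) × (Fin d → Fin m))).ncard = hammingDist u v := by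
  have h : diffSet ((u, v) : (Fin d → Fin m) × (Fin d → Fin m))
      = ↑(Finset.univ.filter fun i => u i ≠ v i) := by
    ext i; simp [diffSet]
  rw [h, Set.ncard_coe_finset]
  rfl

private def upd {m d : ℕ} [NeZero m] (j : Fin d) (b : Fin m) : Fin d → Fin m :=
  Function.update (fun _ => 0) j b

private lemma dist_upd {m d : ℕ} [NeZero m] (x : Fin d → Fin m) (j : Fin d) (b : Fin m) :
    hammingDist x (upd j b) + (if x j = b then 1 else 0)
      = hammingDist x (fun _ => 0) + (if x j = 0 then 1 else 0) := by
  rw [hammingDist, hammingDist, Finset.card_filter, Finset.card_filter,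
    ← Finset.sum_erase_add _ _ (Finset.mem_univ j), ← Finset.sum_erase_add _ _ (Finset.mem_univ j)]
  have hcong : ∀ k ∈ Finset.univ.erase j,
      (if x k ≠ upd (m:=m) j b k then 1 else 0) = (if x k ≠ (fun _ => (0:Fin m)) k then 1 else 0) := by
    intro k hk
    have h0 : upd (m:=m) j b k = (0:Fin m) := Function.update_of_ne (Finset.ne_of_mem_erase hk) _ _
    rw [h0]
  rw [Finset.sum_congr rfl hcong]
  have h1 : upd (m:=m) j b j = b := Function.update_self _ _ _
  rw [h1]
  have h2 : (if x j ≠ b then (1:ℕ) else 0) + (if x j = b then 1 else 0) = 1 := by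
    by_cases hb : x j = b <;> simp [hb]
  have h3 : (if x j ≠ (0:Fin m) then (1:ℕ) else 0) + (if x j = 0 then 1 else 0) = 1 := by
    by_cases h0 : x j = (0:Fin m) <;> simp [h0]
  beta_reduce
  omega

private lemma weight_one {m d : ℕ} [NeZero m] {x : Fin d → Fin m}
    (h : hammingDist x (fun _ => 0) = 1) :
    ∃ j b, b ≠ 0 ∧ x = upd j b := by
  rw [hammingDist] at h
  obtain ⟨j, hj⟩ := Finset.card_eq_one.mp h
  refine ⟨j, x j, ?_, ?_⟩
  · have hmem : j ∈ Finset.univ.filter fun i => x i ≠ (fun _ => (0:Fin m)) i := by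
      rw [hj]; simp
    simpa using hmem
  · funext k
    by_cases hk : k = j
    · subst hk; rw [upd, Function.update_self]
    · have hnm : k ∉ Finset.univ.filter fun i => x i ≠ (fun _ => (0:Fin m)) i := by
        rw [hj]; simp [hk]
    
      simp only [Finset.mem_filter, Finset.mem_univ, true_and, not_not] at hnm
      rw [upd, Function.update_of_ne hk]
      exact hnm

private lemma dist_zero_upd {m d : ℕ} [NeZero m] (j : Fin d) {b : Fin m} (hb : b ≠ 0) :
    hammingDist (upd (m:=m) (d:=d) j b) (fun _ => 0) = 1 := by
  rw [hammingDist]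
  have h : (Finset.univ.filter fun k => upd (m:=m) j b k ≠ (fun _ => (0:Fin m)) k) = {j} := by
    ext k
    by_cases hk : k = j
    · subst hk; rw [Finset.mem_filter]; simp [upd, hb]
    · rw [Finset.mem_filter]; simp [upd, Function.update_of_ne hk, hk]
  rw [h, Finset.card_singleton]

private lemma dist_upd_upd_same {m d : ℕ} [NeZero m] (j : Fin d) {b b' : Fin m} (hbb : b ≠ b') :
    hammingDist (upd (m:=m) (d:=d) j b) (upd j b') = 1 := by
  rw [hammingDist]
  have h : (Finset.univ.filter fun k => upd (m:=m) j b k ≠ upd (m:=m) j b' k) = {j} := by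
    ext k
    by_cases hk : k = j
    · subst hk; rw [Finset.mem_filter]; simp [upd, hbb]
    · rw [Finset.mem_filter]; simp [upd, Function.update_of_ne hk, hk]
  rw [h, Finset.card_singleton]

private lemma dist_upd_upd_le {m d : ℕ} [NeZero m] (j : Fin d) (b b' : Fin m) :
    hammingDist (upd (m:=m) (d:=d) j b) (upd j b') ≤ 1 := by
  rw [hammingDist]
  calc (Finset.univ.filter fun k => upd (m:=m) j b k ≠ upd (m:=m) j b' k).card
      ≤ ({j} : Finset (Fin d)).card := by
        apply Finset.card_le_card
        intro k hk
        simp only [Finset.mem_filter, Finset.mem_univ, true_and] at hk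
        simp only [Finset.mem_singleton]
        by_contra hkj
        refine hk ?_
        simp only [upd]
        rw [Function.update_of_ne hkj, Function.update_of_ne hkj]
    _ = 1 := Finset.card_singleton j

private lemma dist_upd_upd_ne {m d : ℕ} [NeZero m] {j j' : Fin d} (h : j ≠ j')
    {b b' : Fin m} (hb : b ≠ 0) (hb' : b' ≠ 0) :
    hammingDist (upd (m:=m) (d:=d) j b) (upd j' b') = 2 := by
  rw [hammingDist]
  have heq : (Finset.univ.filter fun k => upd (m:=m) j b k ≠ upd (m:=m) j' b' k) = {j, j'} := by
    ext k
    by_cases hk : k = j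
    · subst hk
      rw [Finset.mem_filter]; simp [upd, Function.update_self, Function.update_of_ne h, hb]
    · by_cases hk' : k = j'
      · subst hk'
        rw [Finset.mem_filter]; simp [upd, Function.update_self, Function.update_of_ne (Ne.symm h), hb'.symm, hk]
      · rw [Finset.mem_filter]; simp [upd, Function.update_of_ne hk, Function.update_of_ne hk', hk, hk']
  rw [heq, Finset.card_pair h]


private lemma pair_exists {m d : ℕ} (hm : 2 ≤ m) (a : Set (Fin d)) :
    ∃ u v : Fin d → Fin m, diffSet ((u, v)) = a := by
  classical
  refine ⟨fun _ => ⟨0, by omega⟩, fun i => if i ∈ a then ⟨1, by omega⟩ else ⟨0, by omega⟩, ?_⟩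
  ext i
  by_cases hi : i ∈ a <;> simp [diffSet, hi, Fin.ext_iff]

private lemma diff_image {m d : ℕ} (g : Equiv.Perm (Fin d → Fin m))
    (π : Equiv.Perm (Fin d)) (σ : Fin d → Equiv.Perm (Fin m))
    (hgu : ∀ u, g u = fun i => σ i (u (π⁻¹ i))) (u v : Fin d → Fin m) :
    diffSet ((g u, g v)) = ⇑π '' diffSet ((u, v)) := by
  ext i
  constructor
  · intro hi
    refine ⟨π⁻¹ i, ?_, by simp⟩
    simp only [diffSet, Set.mem_setOf_eq, hgu] at hi ⊢
    exact fun hEq => hi (by rw [hEq])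
  · rintro ⟨j, hj, rfl⟩
    simp only [diffSet, Set.mem_setOf_eq, hgu] at hj ⊢
    rw [show π⁻¹ (π j) = j from π.symm_apply_apply j]
    exact fun hEq => hj ((σ (π j)).injective hEq)

private lemma iso_wreath {m d : ℕ} (hm : 2 ≤ m) (g : Equiv.Perm (Fin d → Fin m))
    (hiso : ∀ u v, hammingDist (g u) (g v) = hammingDist u v) :
    ∃ (π : Equiv.Perm (Fin d)) (σ : Fin d → Equiv.Perm (Fin m)),
      ∀ u, g u = fun i => σ i (u (π⁻¹ i)) := by
  haveI : NeZero m := ⟨by omega⟩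
  classical
  set Z : Fin d → Fin m := fun _ => 0 with hZdef
  set nz : Fin m := ⟨1, by omega⟩ with hnzdef
  have hnz0 : nz ≠ 0 := by simp [hnzdef, Fin.ext_iff]
  set c : Fin d → Fin m := g Z with hcdef
  set h : (Fin d → Fin m) → (Fin d → Fin m) := fun u k => Equiv.swap 0 (c k) (g u k) with hhdef
  have hinj : Function.Injective h := by
    intro u v huv
    apply g.injective
    funext k
    have h1 := congrFun huv k
    simpa using (Equiv.swap (0:Fin m) (c k)).injective h1
  have hiso' : ∀ u v, hammingDist (h u) (h v) = hammingDist u v := by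
    intro u v
    rw [← hiso u v, hammingDist, hammingDist]
    congr 1
    apply Finset.filter_congr
    intro k _
    exact (Equiv.swap (0:Fin m) (c k)).injective.ne_iff
  have hZ0 : h Z = Z := by
    funext k
    simp [hhdef, hcdef, Equiv.swap_apply_right, hZdef]
  -- weight-one images
  have key : ∀ (i : Fin d) (a : Fin m), a ≠ 0 → ∃ j b, b ≠ 0 ∧ h (upd i a) = upd j b := by
    intro i a ha
    apply weight_one
    have : hammingDist (h (upd i a)) Z = hammingDist (h (upd i a)) (h Z) := by rw [hZ0]
    rw [this, hiso']
    exact dist_zero_upd i ha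
  choose J B hB hJB using key
  have claimA : ∀ (i : Fin d) (a : Fin m) (ha : a ≠ 0), J i a ha = J i nz hnz0 := by
    intro i a ha
    by_cases hanz : a = nz
    · subst hanz; rfl
    · by_contra hne
      have h1 : hammingDist (h (upd i a)) (h (upd i nz)) = 1 := by
        rw [hiso']; exact dist_upd_upd_same i hanz
      rw [hJB i a ha, hJB i nz hnz0] at h1
      rw [dist_upd_upd_ne hne (hB i a ha) (hB i nz hnz0)] at h1
      omega
  have hπinj : Function.Injective (fun i => J i nz hnz0) := by
    intro i i' hii
    by_contra hne
    have h2 : hammingDist (h (upd i nz)) (h (upd i' nz)) = 2 := by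
      rw [hiso']; exact dist_upd_upd_ne hne hnz0 hnz0
    rw [hJB i nz hnz0, hJB i' nz hnz0] at h2
    simp only [hii] at h2
    have h3 := dist_upd_upd_le (m:=m) (J i' nz hnz0) (B i nz hnz0) (B i' nz hnz0)
    omega
  set π : Equiv.Perm (Fin d) :=
    Equiv.ofBijective _ (Finite.injective_iff_bijective.mp hπinj) with hπdef
  have hπapp : ∀ i, π i = J i nz hnz0 := fun i => rfl
  set τ : Fin d → Fin m → Fin m :=
    fun i a => if ha : a = 0 then 0 else B i a ha with hτdef
  -- main claim
  have main : ∀ (u : Fin d → Fin m) (i : Fin d), h u (π i) = τ i (u i) := by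
    intro u i
    have hwx : hammingDist (h u) (fun _ => (0:Fin m)) = hammingDist u (fun _ => (0:Fin m)) := by
      rw [← hZdef]
      conv_lhs => rw [← hZ0]
      exact hiso' u Z
    by_cases h0 : u i = 0
    · -- conclude h u (π i) = 0
      have hidu := dist_upd u i nz
      rw [if_neg (show ¬ u i = nz by rw [h0]; exact fun hh' => hnz0 hh'.symm), if_pos h0] at hidu
      -- hidu : dist u (upd i nz) + 0 = dist u Z + 1  (Z is fun _ => 0)
      have hdx : hammingDist (h u) (upd (π i) (B i nz hnz0)) = hammingDist u (upd i nz) := by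
        rw [hπapp, ← hJB i nz hnz0, hiso']
      have hidx := dist_upd (h u) (π i) (B i nz hnz0)
      rw [hdx] at hidx
      have hτ0 : τ i (u i) = 0 := by rw [h0, hτdef]; simp
      rw [hτ0]
      by_cases hx0 : h u (π i) = 0
      · exact hx0
      · exfalso
        rw [if_neg hx0] at hidx
        by_cases hxb : h u (π i) = B i nz hnz0 <;>
          [rw [if_pos hxb] at hidx; rw [if_neg hxb] at hidx] <;> omega
    · have hidu := dist_upd u i (u i)
      rw [if_pos rfl, if_neg h0] at hidu
      have hdx : hammingDist (h u) (upd (π i) (B i (u i) h0)) = hammingDist u (upd i (u i)) := by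
        rw [hπapp, ← claimA i (u i) h0, ← hJB i (u i) h0, hiso']
      have hidx := dist_upd (h u) (π i) (B i (u i) h0)
      rw [hdx] at hidx
      have hτv : τ i (u i) = B i (u i) h0 := by rw [hτdef]; simp [h0]
      rw [hτv]
      by_cases hxb : h u (π i) = B i (u i) h0
      · exact hxb
      · exfalso
        rw [if_neg hxb] at hidx
        by_cases hx0 : h u (π i) = 0 <;>
          [rw [if_pos hx0] at hidx; rw [if_neg hx0] at hidx] <;> omega
  -- τ injective
  have hτinj : ∀ i, Function.Injective (τ i) := by
    intro i a a' hEq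
    by_cases ha : a = 0 <;> by_cases ha' : a' = 0
    · rw [ha, ha']
    · exfalso
      rw [hτdef] at hEq
      simp only [dif_pos ha, dif_neg ha'] at hEq
      exact hB i a' ha' hEq.symm
    · exfalso
      rw [hτdef] at hEq
      simp only [dif_pos ha', dif_neg ha] at hEq
      exact hB i a ha hEq
    · have hBB : B i a ha = B i a' ha' := by
        rw [hτdef] at hEq
        simpa only [dif_neg ha, dif_neg ha'] using hEq
      have hEE : h (upd i a) = h (upd i a') := by
        rw [hJB i a ha, hJB i a' ha', claimA i a ha, claimA i a' ha', hBB]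
      have := hinj hEE
      have h2 := congrFun this i
      simpa only [upd, Function.update_self] using h2
  refine ⟨π, fun i => (Equiv.ofBijective (τ (π⁻¹ i))
    (Finite.injective_iff_bijective.mp (hτinj (π⁻¹ i)))).trans (Equiv.swap 0 (c i)), ?_⟩
  intro u
  funext k
  have h1 : h u k = τ (π⁻¹ k) (u (π⁻¹ k)) := by
    have h2 := main u (π⁻¹ k)
    rwa [show π (π⁻¹ k) = k from π.apply_symm_apply k] at h2
  have h2 : g u k = Equiv.swap 0 (c k) (h u k) := by
    simp [hhdef, Equiv.swap_apply_self]
  rw [h2, h1]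
  rfl


theorem stmt7 (m d : ℕ) (hd : 2 ≤ d) (hm : 2 ≤ m)
    (S : Set (Set (Set (Fin d)))) (hS : IsSAS S)
    (g : Equiv.Perm (Fin d → Fin m)) :
    (∀ R ∈ mPow m d S, ∀ p : (Fin d → Fin m) × (Fin d → Fin m),
        p ∈ R ↔ (g p.1, g p.2) ∈ R) ↔
    ∃ (π : Equiv.Perm (Fin d)) (σ : Fin d → Equiv.Perm (Fin m)),
      (∀ α ∈ S, ∀ a : Set (Fin d), a ∈ α ↔ ⇑π '' a ∈ α) ∧
      ∀ u : Fin d → Fin m, g u = fun i => σ i (u (π⁻¹ i)) := by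
  constructor
  · intro hg
    haveI : NeZero m := ⟨by omega⟩
    have hiso : ∀ u v : Fin d → Fin m, hammingDist (g u) (g v) = hammingDist u v := by
      intro u v
      obtain ⟨α, ⟨hαS, haα⟩, -⟩ := hS.1.2 (diffSet (u, v))
      have hR : relOf m d α ∈ mPow m d S := ⟨⟨(u, v), haα⟩, α, hαS, rfl⟩
      have h2 : diffSet (g u, g v) ∈ α := (hg _ hR (u, v)).mp haα
      have h3 := hS.2.1 α hαS _ h2 _ haα
      rw [← ncard_diffSet u v, ← ncard_diffSet (g u) (g v)]
      exact h3
    obtain ⟨π, σ, hgu⟩ := iso_wreath hm g hiso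
    refine ⟨π, σ, ?_, hgu⟩
    intro α hαS a
    obtain ⟨u, v, hduv⟩ := pair_exists (d := d) hm a
    have hαne : α.Nonempty := Set.nonempty_iff_ne_empty.mpr (by rintro rfl; exact hS.1.1 hαS)
    obtain ⟨a₀, ha₀⟩ := hαne
    obtain ⟨u₀, v₀, hd₀⟩ := pair_exists (d := d) hm a₀
    have hR : relOf m d α ∈ mPow m d S :=
      ⟨⟨(u₀, v₀), show diffSet (u₀, v₀) ∈ α from hd₀ ▸ ha₀⟩, α, hαS, rfl⟩
    have hiff := hg _ hR (u, v)
    have himg : diffSet (g u, g v) = ⇑π '' a := by rw [diff_image g π σ hgu u v, hduv]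
    simp only [relOf, Set.mem_setOf_eq] at hiff
    rw [hduv, himg] at hiff
    exact hiff
  · rintro ⟨π, σ, hπ, hgu⟩ R hR p
    obtain ⟨hne, α, hαS, rfl⟩ := hR
    show diffSet p ∈ α ↔ diffSet (g p.1, g p.2) ∈ α
    rw [diff_image g π σ hgu p.1 p.2]
    exact hπ α hαS (diffSet (p.1, p.2))

end Paper
end

section
/- Let 𝔖 be a set association scheme on Ω = [d] with d ≥ 2, and let m ≥ 2. Then the association scheme [m]^𝔖 is schurian if and only if 𝔖 is schurian. -/
namespace Paper


def setAutGroup {Ω : Type*} (S : Set (Set (Set Ω))) : Subgroup (Equiv.Perm Ω) where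
  carrier := {π | ∀ α ∈ S, ∀ a : Set Ω, a ∈ α ↔ ⇑π '' a ∈ α}
  one_mem' := by intro α hα a; simp
  mul_mem' := by
    intro g h hg hh α hα a
    have h1 : ⇑(g * h) '' a = ⇑g '' (⇑h '' a) := by
      rw [Equiv.Perm.coe_mul, Set.image_comp]
    rw [h1]
    exact (hh α hα a).trans (hg α hα (⇑h '' a))
  inv_mem' := by
    intro g hg α hα a
    have h0 := hg α hα (⇑g⁻¹ '' a)
    have h2 : ⇑g '' (⇑g⁻¹ '' a) = a := by
      simp [← Set.image_comp]
    rw [h2] at h0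
    exact h0.symm

def SetSchurian {Ω : Type*} (S : Set (Set (Set Ω))) : Prop :=
  S = Set.range (fun a : Set Ω => {b : Set Ω | ∃ π ∈ setAutGroup S, b = ⇑π '' a})

def SchemeSchurian {V : Type*} (X : Set (Set (V × V))) : Prop :=
  X = Set.range (fun p : V × V => {q : V × V | ∃ g ∈ schemeAut X, q = (g p.1, g p.2)})

section DS
variable {m d : ℕ}

lemma mem_diffSet {u v : Fin d → Fin m} {i : Fin d} :
    i ∈ diffSet (u, v) ↔ u i ≠ v i := Iff.rfl

lemma diffSet_comm (u v : Fin d → Fin m) : diffSet (u, v) = diffSet (v, u) := by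
  ext i; exact ne_comm

lemma diffSet_triangle (u v w : Fin d → Fin m) :
    diffSet (u, w) ⊆ diffSet (u, v) ∪ diffSet (v, w) := by
  intro i hi
  by_contra h
  simp only [Set.mem_union, mem_diffSet, not_or, not_not] at h ⊢
  exact hi (h.1.trans h.2)

lemma diffSet_eq_empty {u v : Fin d → Fin m} : diffSet (u, v) = ∅ ↔ u = v := by
  constructor
  · intro h; funext i
    by_contra hi
    exact absurd (h ▸ hi : i ∈ (∅ : Set (Fin d))) (Set.notMem_empty i)
  · rintro rfl; ext i; simp [mem_diffSet]

lemma diffSet_update {u : Fin d → Fin m} {i : Fin d} {c : Fin m} (hc : c ≠ u i) :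
    diffSet (u, Function.update u i c) = {i} := by
  ext j
  rcases eq_or_ne j i with rfl | hj
  · simp [mem_diffSet, Function.update_self, hc.symm]
  · simp [mem_diffSet, Function.update_of_ne hj, hj]

lemma diffSet_update_diff {u v : Fin d → Fin m} {i : Fin d} :
    diffSet (Function.update u i (v i), v) = diffSet (u, v) \ {i} := by
  ext j
  rcases eq_or_ne j i with rfl | hj
  · simp [mem_diffSet, Function.update_self]
  · simp [mem_diffSet, Function.update_of_ne hj, hj]

end DS

section Struct
variable {m d : ℕ}

/-- some element of `Fin m` different from `x`, given `2 ≤ m`. -/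
def oth (hm : 2 ≤ m) (x : Fin m) : Fin m :=
  if x = ⟨0, by omega⟩ then ⟨1, by omega⟩ else ⟨0, by omega⟩

lemma oth_ne (hm : 2 ≤ m) (x : Fin m) : oth hm x ≠ x := by
  unfold oth
  split
  · rename_i h; rw [h]; intro hc; exact absurd (Fin.mk.injEq .. ▸ hc) (by simp)
  · rename_i h; exact fun hc => h hc.symm

variable (G : (Fin d → Fin m) → (Fin d → Fin m))
variable (H : ∀ u v, (diffSet (G u, G v)).ncard = (diffSet (u, v)).ncard)

include H

lemma edge_image {u v : Fin d → Fin m} {i : Fin d} (h : diffSet (u, v) = {i}) :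
    ∃ j, diffSet (G u, G v) = {j} := by
  have := H u v
  rw [h, Set.ncard_singleton] at this
  exact Set.ncard_eq_one.mp this

lemma same_base {u v v' : Fin d → Fin m} {i : Fin d}
    (h : diffSet (u, v) = {i}) (h' : diffSet (u, v') = {i}) :
    diffSet (G u, G v) = diffSet (G u, G v') := by
  rcases eq_or_ne v v' with rfl | hvv
  · rfl
  obtain ⟨a, ha⟩ := edge_image G H h
  obtain ⟨a', ha'⟩ := edge_image G H h'
  rcases eq_or_ne a a' with rfl | hne
  · rw [ha, ha']
  exfalso
  have hsub : diffSet (v, v') ⊆ {i} := by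
    intro j hj
    by_contra hji
    have h1 : u j = v j := by
      by_contra hc; exact hji (h ▸ (hc : j ∈ diffSet (u, v)))
    have h2 : u j = v' j := by
      by_contra hc; exact hji (h' ▸ (hc : j ∈ diffSet (u, v')))
    exact hj (h1.symm.trans h2)
  have hvne : (diffSet (v, v')).Nonempty := by
    rw [Set.nonempty_iff_ne_empty]; intro hc; exact hvv (diffSet_eq_empty.mp hc)
  have hvv' : diffSet (v, v') = {i} := (hvne.subset_singleton_iff).mp hsub
  have hcard : (diffSet (G v, G v')).ncard = 1 := by
    rw [H, hvv', Set.ncard_singleton]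
  have hamem : a ∈ diffSet (G v, G v') := by
    have h1 : G u a ≠ G v a := by rw [← mem_diffSet, ha]; rfl
    have h2 : G u a = G v' a := by
      by_contra hc
      have : a ∈ diffSet (G u, G v') := hc
      rw [ha'] at this
      exact hne this
    intro hc
    exact h1 (by rw [h2]; exact hc.symm)
  have hamem' : a' ∈ diffSet (G v, G v') := by
    have h1 : G u a' ≠ G v' a' := by rw [← mem_diffSet, ha']; rfl
    have h2 : G u a' = G v a' := by
      by_contra hc
      have : a' ∈ diffSet (G u, G v) := hc
      rw [ha] at this
      exact hne this.symm
    intro hc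
    exact h1 (by rw [h2]; exact hc)
  have hss : ({a, a'} : Set (Fin d)) ⊆ diffSet (G v, G v') := by
    intro x hx
    rcases hx with rfl | hx
    · exact hamem
    · rw [Set.mem_singleton_iff] at hx; subst hx; exact hamem'
  have : ({a, a'} : Set (Fin d)).ncard ≤ (diffSet (G v, G v')).ncard :=
    Set.ncard_le_ncard hss (Set.toFinite _)
  rw [Set.ncard_pair hne, hcard] at this
  omega


omit H in
/-- the direction of the image of the `i`-edge at `u` -/
def dirset (hm : 2 ≤ m) (u : Fin d → Fin m) (i : Fin d) : Set (Fin d) :=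
  diffSet (G u, G (Function.update u i (oth hm (u i))))

lemma dirset_spec (hm : 2 ≤ m) {u v : Fin d → Fin m} {i : Fin d}
    (h : diffSet (u, v) = {i}) :
    diffSet (G u, G v) = dirset G hm u i :=
  same_base G H h (diffSet_update (oth_ne hm (u i)))

lemma dir_same (hm : 2 ≤ m) {u u' : Fin d → Fin m} {i : Fin d}
    (hki : diffSet (u, u') = {i}) :
    dirset G hm u i = dirset G hm u' i := by
  have h2 : diffSet (u', u) = {i} := by rw [diffSet_comm]; exact hki
  rw [← dirset_spec G H hm hki, ← dirset_spec G H hm h2, diffSet_comm]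

lemma dir_square (hm : 2 ≤ m) {u u' : Fin d → Fin m} {i k : Fin d}
    (hik : i ≠ k) (hk : diffSet (u, u') = {k}) :
    dirset G hm u i = dirset G hm u' i := by
  have hui : u i = u' i := by
    by_contra hc
    have : i ∈ diffSet (u, u') := hc
    rw [hk] at this
    exact hik this
  set c := oth hm (u i) with hcdef
  have hcu : c ≠ u i := oth_ne hm (u i)
  have hcu' : c ≠ u' i := by rw [← hui]; exact hcu
  set v := Function.update u i c with hv
  set v' := Function.update u' i c with hv'
  have e1 : diffSet (u, v) = {i} := diffSet_update hcu
  have e2 : diffSet (u', v') = {i} := diffSet_update hcu'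
  have e3 : diffSet (v, v') = {k} := by
    ext j
    rcases eq_or_ne j i with rfl | hj
    · simp only [mem_diffSet, hv, hv', Function.update_self, Set.mem_singleton_iff]
      constructor
      · intro hcc; exact absurd rfl hcc
      · intro hcc; exact absurd hcc hik
    · simp only [mem_diffSet, hv, hv', Function.update_of_ne hj]
      exact Set.ext_iff.mp hk j
  have e4 : diffSet (u, v') = {i, k} := by
    ext j
    rcases eq_or_ne j i with rfl | hj
    · simp only [mem_diffSet, hv', Function.update_self, Set.mem_insert_iff,
        Set.mem_singleton_iff]
      constructor
      · intro _; exact Or.inl trivial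
      · intro _; rw [hui]; exact fun hcc => hcu' hcc.symm
    · simp only [mem_diffSet, hv', Function.update_of_ne hj, Set.mem_insert_iff,
        Set.mem_singleton_iff]
      rw [← Set.mem_singleton_iff (a := j) (b := k), ← hk]
      simp only [mem_diffSet]
      exact ⟨fun h => Or.inr h, fun h => h.resolve_left hj⟩
  have e5 : diffSet (v, u') = {i, k} := by
    ext j
    rcases eq_or_ne j i with rfl | hj
    · simp only [mem_diffSet, hv, Function.update_self, Set.mem_insert_iff,
        Set.mem_singleton_iff]
      constructor
      · intro _; exact Or.inl trivial
      · intro _; exact hcu'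
    · simp only [mem_diffSet, hv, Function.update_of_ne hj, Set.mem_insert_iff,
        Set.mem_singleton_iff]
      rw [← Set.mem_singleton_iff (a := j) (b := k), ← hk]
      simp only [mem_diffSet]
      exact ⟨fun h => Or.inr h, fun h => h.resolve_left hj⟩
  obtain ⟨a, ha⟩ := edge_image G H e1
  obtain ⟨a', ha'⟩ := edge_image G H e2
  obtain ⟨b, hb⟩ := edge_image G H hk
  obtain ⟨b', hb'⟩ := edge_image G H e3
  have hGd : (diffSet (G u, G v')).ncard = 2 := by rw [H, e4, Set.ncard_pair hik]
  have sub2 : diffSet (G u, G v') ⊆ {a, b'} := by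
    have h := diffSet_triangle (G u) (G v) (G v')
    rw [ha, hb'] at h
    exact h
  have eq2 : diffSet (G u, G v') = {a, b'} := by
    have h1 : ({a, b'} : Set (Fin d)).ncard ≤ 2 :=
      le_trans (Set.ncard_insert_le _ _) (by rw [Set.ncard_singleton])
    exact Set.eq_of_subset_of_ncard_le sub2 (h1.trans hGd.ge) (Set.toFinite _)
  have hab' : a ≠ b' := by
    intro hcon
    rw [hcon, Set.pair_eq_singleton] at eq2
    rw [eq2, Set.ncard_singleton] at hGd
    omega
  have hGd3 : (diffSet (G v, G u')).ncard = 2 := by rw [H, e5, Set.ncard_pair hik]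
  have eq3 : diffSet (G v, G u') = {a, b} := by
    have h := diffSet_triangle (G v) (G u) (G u')
    rw [diffSet_comm (G v) (G u), ha, hb] at h
    have h1 : ({a, b} : Set (Fin d)).ncard ≤ 2 :=
      le_trans (Set.ncard_insert_le _ _) (by rw [Set.ncard_singleton])
    exact Set.eq_of_subset_of_ncard_le h (h1.trans hGd3.ge) (Set.toFinite _)
  have eq4 : diffSet (G v, G u') = {b', a'} := by
    have h := diffSet_triangle (G v) (G v') (G u')
    rw [diffSet_comm (G v') (G u'), hb', ha'] at h
    have h1 : ({b', a'} : Set (Fin d)).ncard ≤ 2 :=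
      le_trans (Set.ncard_insert_le _ _) (by rw [Set.ncard_singleton])
    exact Set.eq_of_subset_of_ncard_le h (h1.trans hGd3.ge) (Set.toFinite _)
  have haa : a = a' := by
    have hmem : a ∈ ({b', a'} : Set (Fin d)) := by
      rw [← eq4, eq3]; exact Set.mem_insert a _
    rcases hmem with h | h
    · exact absurd h hab'
    · exact h
  rw [← dirset_spec G H hm e1, ← dirset_spec G H hm e2, ha, ha', haa]

lemma dir_adj (hm : 2 ≤ m) {u u' : Fin d → Fin m} (i : Fin d)
    (h : (diffSet (u, u')).ncard = 1) :
    dirset G hm u i = dirset G hm u' i := by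
  obtain ⟨k, hk⟩ := Set.ncard_eq_one.mp h
  rcases eq_or_ne i k with rfl | hik
  · exact dir_same G H hm hk
  · exact dir_square G H hm hik hk

lemma dir_const (hm : 2 ≤ m) :
    ∀ (n : ℕ) (u u' : Fin d → Fin m) (i : Fin d),
      (diffSet (u, u')).ncard = n → dirset G hm u i = dirset G hm u' i := by
  intro n
  induction n with
  | zero =>
    intro u u' i h
    have : u = u' := diffSet_eq_empty.mp ((Set.ncard_eq_zero (Set.toFinite _)).mp h)
    rw [this]
  | succ n ih =>
    intro u u' i h
    have hne : (diffSet (u, u')).Nonempty := Set.nonempty_of_ncard_ne_zero (by omega)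
    obtain ⟨k, hk⟩ := hne
    have e1 : diffSet (u, Function.update u k (u' k)) = {k} :=
      diffSet_update (Ne.symm hk)
    have e2 : diffSet (Function.update u k (u' k), u') = diffSet (u, u') \ {k} :=
      diffSet_update_diff
    have hc2 : (diffSet (Function.update u k (u' k), u')).ncard = n := by
      rw [e2, Set.ncard_diff_singleton_of_mem hk, h]
      omega
    calc dirset G hm u i = dirset G hm (Function.update u k (u' k)) i :=
          dir_adj G H hm i (by rw [e1, Set.ncard_singleton])
      _ = dirset G hm u' i := ih _ _ i hc2

theorem hamming_structure (hm : 2 ≤ m) :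
    ∃ π : Equiv.Perm (Fin d), ∀ u v, diffSet (G u, G v) = ⇑π '' diffSet (u, v) := by
  classical
  have hm0 : 0 < m := by omega
  set b0 : Fin d → Fin m := fun _ => ⟨0, hm0⟩ with hb0
  have hex : ∀ i : Fin d, ∃ j, dirset G hm b0 i = {j} := by
    intro i
    exact edge_image G H (diffSet_update (oth_ne hm _))
  choose p0 hp0 using hex
  have key : ∀ (u v : Fin d → Fin m) (i : Fin d),
      diffSet (u, v) = {i} → diffSet (G u, G v) = {p0 i} := by
    intro u v i h
    rw [dirset_spec G H hm h, dir_const G H hm _ u b0 i rfl, hp0]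
  have inj : Function.Injective p0 := by
    intro i j hij
    by_contra hne
    set vi := Function.update b0 i (oth hm (b0 i)) with hvi
    set vj := Function.update b0 j (oth hm (b0 j)) with hvj
    have e1 : diffSet (b0, vi) = {i} := diffSet_update (oth_ne hm _)
    have e2 : diffSet (b0, vj) = {j} := diffSet_update (oth_ne hm _)
    have d1 : diffSet (G b0, G vi) = {p0 i} := key _ _ _ e1
    have d2 : diffSet (G b0, G vj) = {p0 j} := key _ _ _ e2
    have sub : diffSet (G vi, G vj) ⊆ {p0 j} := by
      have h := diffSet_triangle (G vi) (G b0) (G vj)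
      rw [diffSet_comm (G vi) (G b0), d1, d2, hij, Set.union_self] at h
      exact h
    have hle : (diffSet (G vi, G vj)).ncard ≤ 1 :=
      le_trans (Set.ncard_le_ncard sub (Set.toFinite _)) (by rw [Set.ncard_singleton])
    have hij2 : diffSet (vi, vj) = {i, j} := by
      ext l
      rcases eq_or_ne l i with rfl | hli
      · simp only [mem_diffSet, hvi, hvj, Function.update_self,
          Function.update_of_ne hne, Set.mem_insert_iff, Set.mem_singleton_iff]
        exact ⟨fun _ => Or.inl trivial, fun _ => oth_ne hm _⟩
      · rcases eq_or_ne l j with rfl | hlj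
        · simp only [mem_diffSet, hvi, hvj, Function.update_self,
            Function.update_of_ne hli, Set.mem_insert_iff, Set.mem_singleton_iff]
          exact ⟨fun _ => Or.inr trivial, fun _ => fun hc => oth_ne hm _ hc.symm⟩
        · simp only [mem_diffSet, hvi, hvj, Function.update_of_ne hli,
            Function.update_of_ne hlj, Set.mem_insert_iff, Set.mem_singleton_iff]
          exact ⟨fun hc => absurd rfl hc, fun hc => absurd hc (not_or.mpr ⟨hli, hlj⟩)⟩
    have h2 : (diffSet (G vi, G vj)).ncard = 2 := by rw [H, hij2, Set.ncard_pair hne]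
    omega
  have hbij : Function.Bijective p0 := Finite.injective_iff_bijective.mp inj
  refine ⟨Equiv.ofBijective p0 hbij, ?_⟩
  have hcoe : ⇑(Equiv.ofBijective p0 hbij) = p0 := rfl
  rw [hcoe]
  have main : ∀ (n : ℕ) (u v : Fin d → Fin m), (diffSet (u, v)).ncard = n →
      diffSet (G u, G v) = p0 '' diffSet (u, v) := by
    intro n
    induction n with
    | zero =>
      intro u v h
      have huv : u = v := diffSet_eq_empty.mp ((Set.ncard_eq_zero (Set.toFinite _)).mp h)
      subst huv
      rw [diffSet_eq_empty.mpr rfl, diffSet_eq_empty.mpr rfl, Set.image_empty]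
    | succ n ih =>
      intro u v h
      have hne : (diffSet (u, v)).Nonempty := Set.nonempty_of_ncard_ne_zero (by omega)
      obtain ⟨i, hi⟩ := hne
      set w := Function.update u i (v i) with hw
      have e1 : diffSet (u, w) = {i} := diffSet_update (Ne.symm hi)
      have e2 : diffSet (w, v) = diffSet (u, v) \ {i} := diffSet_update_diff
      have hc2 : (diffSet (w, v)).ncard = n := by
        rw [e2, Set.ncard_diff_singleton_of_mem hi, h]
        omega
      have d1 : diffSet (G u, G w) = {p0 i} := key _ _ _ e1
      have d2 : diffSet (G w, G v) = p0 '' (diffSet (u, v) \ {i}) := by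
        rw [ih w v hc2, e2]
      have sub : diffSet (G u, G v) ⊆ p0 '' diffSet (u, v) := by
        have ht := diffSet_triangle (G u) (G w) (G v)
        rw [d1, d2] at ht
        refine ht.trans ?_
        rw [← Set.image_singleton, ← Set.image_union]
        apply Set.image_mono
        intro x hx
        rcases hx with hx | hx
        · rw [Set.mem_singleton_iff] at hx; subst hx; exact hi
        · exact hx.1
      have hcard : (p0 '' diffSet (u, v)).ncard ≤ (diffSet (G u, G v)).ncard := by
        rw [Set.ncard_image_of_injective _ inj, H]
      exact Set.eq_of_subset_of_ncard_le sub hcard (Set.toFinite _)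
  intro u v
  exact main (diffSet (u, v)).ncard u v rfl

end Struct

section Main

variable {m d : ℕ} {S : Set (Set (Set (Fin d)))}

lemma perm_inv_apply_self {α : Type*} (f : Equiv.Perm α) (x : α) : f⁻¹ (f x) = x :=
  Equiv.Perm.inv_eq_iff_eq.mpr rfl

lemma perm_apply_inv_self {α : Type*} (f : Equiv.Perm α) (x : α) : f (f⁻¹ x) = x :=
  (Equiv.eq_symm_apply f).mp rfl

lemma mem_relOf {α : Set (Set (Fin d))} {p : (Fin d → Fin m) × (Fin d → Fin m)} :
    p ∈ relOf m d α ↔ diffSet p ∈ α := Iff.rfl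

lemma mem_schemeAut {V : Type*} {X : Set (Set (V × V))} {g : Equiv.Perm V} :
    g ∈ schemeAut X ↔ ∀ R ∈ X, ∀ x y : V, (x, y) ∈ R ↔ (g x, g y) ∈ R := Iff.rfl

lemma mem_setAutGroup {Ω : Type*} {T : Set (Set (Set Ω))} {π : Equiv.Perm Ω} :
    π ∈ setAutGroup T ↔ ∀ α ∈ T, ∀ a : Set Ω, a ∈ α ↔ ⇑π '' a ∈ α := Iff.rfl

lemma exists_pair (hm : 2 ≤ m) (a : Set (Fin d)) :
    ∃ u v : Fin d → Fin m, diffSet (u, v) = a := by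
  classical
  refine ⟨fun _ => ⟨0, by omega⟩,
    fun i => if i ∈ a then ⟨1, by omega⟩ else ⟨0, by omega⟩, ?_⟩
  ext i
  by_cases hi : i ∈ a <;> simp [mem_diffSet, hi, Fin.ext_iff]

lemma cell_nonempty (hS : IsSAS S) {α : Set (Set (Fin d))} (hα : α ∈ S) : α.Nonempty := by
  rw [Set.nonempty_iff_ne_empty]
  rintro rfl
  exact hS.1.1 hα

lemma relOf_mem_mPow (hm : 2 ≤ m) (hS : IsSAS S) {α : Set (Set (Fin d))} (hα : α ∈ S) :
    relOf m d α ∈ mPow m d S := by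
  obtain ⟨a, ha⟩ := cell_nonempty hS hα
  obtain ⟨u, v, huv⟩ := exists_pair hm a
  exact ⟨⟨(u, v), show diffSet (u, v) ∈ α from huv ▸ ha⟩, α, hα, rfl⟩

lemma aut_to_setaut (hm : 2 ≤ m) (hS : IsSAS S) {g : Equiv.Perm (Fin d → Fin m)}
    (hg : g ∈ schemeAut (mPow m d S)) :
    ∃ π : Equiv.Perm (Fin d), π ∈ setAutGroup S ∧
      ∀ u v, diffSet (g u, g v) = ⇑π '' diffSet (u, v) := by
  have sameCell : ∀ (u v : Fin d → Fin m) (α : Set (Set (Fin d))), α ∈ S →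
      (diffSet (u, v) ∈ α ↔ diffSet (g u, g v) ∈ α) := fun u v α hα =>
    mem_schemeAut.mp hg (relOf m d α) (relOf_mem_mPow hm hS hα) u v
  have H : ∀ u v : Fin d → Fin m,
      (diffSet (g u, g v)).ncard = (diffSet (u, v)).ncard := by
    intro u v
    obtain ⟨α, ⟨hα, hmem⟩, -⟩ := hS.1.2 (diffSet (u, v))
    exact hS.2.1 α hα _ ((sameCell u v α hα).mp hmem) _ hmem
  obtain ⟨π, hπ⟩ := hamming_structure (⇑g) H hm
  refine ⟨π, ?_, hπ⟩
  intro α hα a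
  obtain ⟨u, v, huv⟩ := exists_pair hm a
  rw [← huv, sameCell u v α hα, hπ u v, huv]

lemma cell_eq_orbit_of_schurian (hm : 2 ≤ m) (hS : IsSAS S)
    (hX : SchemeSchurian (mPow m d S)) {α : Set (Set (Fin d))} (hα : α ∈ S)
    {a : Set (Fin d)} (ha : a ∈ α) :
    α = {b : Set (Fin d) | ∃ π ∈ setAutGroup S, b = ⇑π '' a} := by
  have hX' : mPow m d S = Set.range (fun p : ((Fin d → Fin m) × (Fin d → Fin m)) =>
      {q : ((Fin d → Fin m) × (Fin d → Fin m)) |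
        ∃ g ∈ schemeAut (mPow m d S), q = (g p.1, g p.2)}) := hX
  ext b
  constructor
  · intro hb
    obtain ⟨u, v, huv⟩ := exists_pair hm a
    obtain ⟨u', v', huv'⟩ := exists_pair hm b
    have hR : relOf m d α ∈ mPow m d S := relOf_mem_mPow hm hS hα
    rw [hX'] at hR
    obtain ⟨p, hp⟩ := hR
    have hmem1 : ((u, v) : _ × _) ∈ relOf m d α := show diffSet (u, v) ∈ α from huv ▸ ha
    have hmem2 : ((u', v') : _ × _) ∈ relOf m d α :=
      show diffSet (u', v') ∈ α from huv' ▸ hb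
    rw [← hp] at hmem1 hmem2
    obtain ⟨g₁, hg₁, hpe₁⟩ := hmem1
    obtain ⟨g₂, hg₂, hpe₂⟩ := hmem2
    have h1 : u = g₁ p.1 := congrArg Prod.fst hpe₁
    have h2 : v = g₁ p.2 := congrArg Prod.snd hpe₁
    have h3 : u' = g₂ p.1 := congrArg Prod.fst hpe₂
    have h4 : v' = g₂ p.2 := congrArg Prod.snd hpe₂
    have hgmem : g₂ * g₁⁻¹ ∈ schemeAut (mPow m d S) := mul_mem hg₂ (inv_mem hg₁)
    have hgu : (g₂ * g₁⁻¹) u = u' := by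
      rw [Equiv.Perm.mul_apply, h1, perm_inv_apply_self, ← h3]
    have hgv : (g₂ * g₁⁻¹) v = v' := by
      rw [Equiv.Perm.mul_apply, h2, perm_inv_apply_self, ← h4]
    obtain ⟨π, hπg, hπ⟩ := aut_to_setaut hm hS hgmem
    refine ⟨π, hπg, ?_⟩
    rw [← huv', ← hgu, ← hgv, hπ u v, huv]
  · rintro ⟨π, hπ, rfl⟩
    exact (mem_setAutGroup.mp hπ α hα a).mp ha

lemma forward_dir (hm : 2 ≤ m) (hS : IsSAS S)
    (hX : SchemeSchurian (mPow m d S)) : SetSchurian S := by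
  show S = Set.range _
  ext α
  constructor
  · intro hα
    obtain ⟨a, ha⟩ := cell_nonempty hS hα
    exact ⟨a, (cell_eq_orbit_of_schurian hm hS hX hα ha).symm⟩
  · rintro ⟨a, ha⟩
    obtain ⟨β, ⟨hβ, hmemβ⟩, -⟩ := hS.1.2 a
    have hcell : (fun a : Set (Fin d) =>
        {b : Set (Fin d) | ∃ π ∈ setAutGroup S, b = ⇑π '' a}) a = β :=
      (cell_eq_orbit_of_schurian hm hS hX hβ hmemβ).symm
    rw [← ha, hcell]
    exact hβ

lemma pair_perm {x y x' y' : Fin m} (h : (x = y) ↔ (x' = y')) :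
    ∃ σ : Equiv.Perm (Fin m), σ x = x' ∧ σ y = y' := by
  rcases eq_or_ne x y with rfl | hxy
  · have hxy' : x' = y' := h.mp rfl
    subst hxy'
    exact ⟨Equiv.swap x x', Equiv.swap_apply_left x x', Equiv.swap_apply_left x x'⟩
  · have hxy' : x' ≠ y' := fun hc => hxy (h.mpr hc)
    set s1 := Equiv.swap x x' with hs1
    have hy1 : s1 y ≠ x' := by
      intro hc
      have h2 : s1 y = s1 x := by rw [hc, hs1, Equiv.swap_apply_left]
      exact hxy (s1.injective h2).symm
    refine ⟨s1.trans (Equiv.swap (s1 y) y'), ?_, ?_⟩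
    · show Equiv.swap (s1 y) y' (s1 x) = x'
      rw [hs1, Equiv.swap_apply_left, ← hs1]
      exact Equiv.swap_apply_of_ne_of_ne (fun hc => hy1 hc.symm) hxy'
    · show Equiv.swap (s1 y) y' (s1 y) = y'
      exact Equiv.swap_apply_left _ _

def wrPerm (π : Equiv.Perm (Fin d)) (σ : Fin d → Equiv.Perm (Fin m)) :
    Equiv.Perm (Fin d → Fin m) where
  toFun u := fun i => σ i (u (π⁻¹ i))
  invFun u := fun i => (σ (π i))⁻¹ (u (π i))
  left_inv u := by funext i; simp
  right_inv u := by funext i; simp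

lemma wrPerm_apply (π : Equiv.Perm (Fin d)) (σ : Fin d → Equiv.Perm (Fin m))
    (u : Fin d → Fin m) (i : Fin d) : wrPerm π σ u i = σ i (u (π⁻¹ i)) := rfl

lemma wrPerm_diffSet (π : Equiv.Perm (Fin d)) (σ : Fin d → Equiv.Perm (Fin m))
    (u v : Fin d → Fin m) :
    diffSet (wrPerm π σ u, wrPerm π σ v) = ⇑π '' diffSet (u, v) := by
  ext i
  constructor
  · intro h
    refine ⟨π⁻¹ i, ?_, perm_apply_inv_self π i⟩
    intro hc
    have hc' : u (π⁻¹ i) = v (π⁻¹ i) := hc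
    exact h (show σ i (u (π⁻¹ i)) = σ i (v (π⁻¹ i)) by rw [hc'])
  · rintro ⟨j, hj, rfl⟩
    intro hc
    have h2 : u (π⁻¹ (π j)) = v (π⁻¹ (π j)) :=
      (σ (π j)).injective (hc : σ (π j) (u (π⁻¹ (π j))) = σ (π j) (v (π⁻¹ (π j))))
    rw [perm_inv_apply_self] at h2
    exact hj h2

lemma wrPerm_mem {π : Equiv.Perm (Fin d)} (hπ : π ∈ setAutGroup S)
    (σ : Fin d → Equiv.Perm (Fin m)) : wrPerm π σ ∈ schemeAut (mPow m d S) := by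
  rw [mem_schemeAut]
  rintro R ⟨hne, α, hα, rfl⟩ x y
  show diffSet (x, y) ∈ α ↔ diffSet (wrPerm π σ x, wrPerm π σ y) ∈ α
  rw [wrPerm_diffSet]
  exact mem_setAutGroup.mp hπ α hα _

lemma set_trans (hs : SetSchurian S) {α : Set (Set (Fin d))} (hα : α ∈ S)
    {a b : Set (Fin d)} (ha : a ∈ α) (hb : b ∈ α) :
    ∃ π ∈ setAutGroup S, ⇑π '' a = b := by
  have hs' : S = Set.range (fun a : Set (Fin d) =>
      {b : Set (Fin d) | ∃ π ∈ setAutGroup S, b = ⇑π '' a}) := hs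
  rw [hs'] at hα
  obtain ⟨c, hc⟩ := hα
  rw [← hc] at ha hb
  obtain ⟨π₁, hπ₁, rfl⟩ := ha
  obtain ⟨π₂, hπ₂, rfl⟩ := hb
  refine ⟨π₂ * π₁⁻¹, mul_mem hπ₂ (inv_mem hπ₁), ?_⟩
  rw [Set.image_image]
  apply Set.image_congr
  intro x _
  simp [Equiv.Perm.mul_apply]

lemma cell_trans (hm : 2 ≤ m) (hs : SetSchurian S) {α : Set (Set (Fin d))} (hα : α ∈ S)
    {p q : (Fin d → Fin m) × (Fin d → Fin m)} (hp : diffSet p ∈ α) (hq : diffSet q ∈ α) :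
    ∃ g ∈ schemeAut (mPow m d S), g p.1 = q.1 ∧ g p.2 = q.2 := by
  obtain ⟨π, hπ, himg⟩ := set_trans hs hα hp hq
  have hmemiff : ∀ i : Fin d, (π⁻¹ i ∈ diffSet p ↔ i ∈ diffSet q) := by
    intro i
    rw [← himg]
    constructor
    · intro hme
      exact ⟨π⁻¹ i, hme, perm_apply_inv_self π i⟩
    · rintro ⟨j, hj, hji⟩
      have hji' : j = π⁻¹ i := by rw [← hji, perm_inv_apply_self]
      rwa [← hji']
  have hcond : ∀ i : Fin d, (p.1 (π⁻¹ i) = p.2 (π⁻¹ i)) ↔ (q.1 i = q.2 i) := by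
    intro i
    constructor
    · intro he
      by_contra hne
      exact ((hmemiff i).mpr hne) he
    · intro he
      by_contra hne
      exact ((hmemiff i).mp hne) he
  choose σ hσ1 hσ2 using fun i => pair_perm (hcond i)
  refine ⟨wrPerm π σ, wrPerm_mem hπ σ, ?_, ?_⟩
  · funext i; exact hσ1 i
  · funext i; exact hσ2 i

lemma backward_dir (hm : 2 ≤ m) (hS : IsSAS S) (hs : SetSchurian S) :
    SchemeSchurian (mPow m d S) := by
  have orbit_eq : ∀ α ∈ S, ∀ p₀ : (Fin d → Fin m) × (Fin d → Fin m), diffSet p₀ ∈ α →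
      relOf m d α = {q : (Fin d → Fin m) × (Fin d → Fin m) |
        ∃ g ∈ schemeAut (mPow m d S), q = (g p₀.1, g p₀.2)} := by
    intro α hα p₀ hp₀
    ext q
    constructor
    · intro hq
      obtain ⟨g, hg, h1, h2⟩ := cell_trans hm hs hα hp₀ hq
      exact ⟨g, hg, by rw [h1, h2]⟩
    · rintro ⟨g, hg, rfl⟩
      exact (mem_schemeAut.mp hg (relOf m d α) (relOf_mem_mPow hm hS hα) p₀.1 p₀.2).mp hp₀
  show mPow m d S = Set.range _
  ext R
  constructor
  · rintro ⟨⟨p₀, hp₀⟩, α, hα, rfl⟩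
    exact ⟨p₀, (orbit_eq α hα p₀ hp₀).symm⟩
  · rintro ⟨p₀, hp₀⟩
    obtain ⟨α, ⟨hα, hmem⟩, -⟩ := hS.1.2 (diffSet p₀)
    have hR : (fun p : (Fin d → Fin m) × (Fin d → Fin m) =>
        {q : (Fin d → Fin m) × (Fin d → Fin m) |
          ∃ g ∈ schemeAut (mPow m d S), q = (g p.1, g p.2)}) p₀ = relOf m d α :=
      (orbit_eq α hα p₀ hmem).symm
    rw [← hp₀, hR]
    exact relOf_mem_mPow hm hS hα

end Main

theorem stmt8 (m d : ℕ) (hd : 2 ≤ d) (hm : 2 ≤ m)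
    (S : Set (Set (Set (Fin d)))) (hS : IsSAS S) :
    SchemeSchurian (mPow m d S) ↔ SetSchurian S :=
  ⟨fun hX => forward_dir hm hS hX, fun hs => backward_dir hm hS hs⟩

end Paper
end
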